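/- arXiv:1007.3652 — 10 statements merged into one kernel-verified Lean document; each statement's English description precedes it below -/
import Mathlib

section
/- Let T : X ⇉ X* be a maximal monotone operator on a Banach space X and let f_T be any representative function of T (i.e., f_T : X × X* → ℝ ∪ {+∞} is convex, lower semicontinuous, f_T(x, x*) ≥ ⟨x*, x⟩ everywhere, and f_T(x, x*) = ⟨x*, x⟩ for (x, x*) ∈ G(T)). Then f_T*(x*, x) ≥ ⟨x*, x⟩ for all (x, x*) ∈ X × X*. -/
noncomputable section

open scoped Topology Pointwise

variable {X : Type*} [NormedAddCommGroup X] [NormedSpace ℝ X]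

/-- The topological dual of a real normed space. -/
abbrev Dd (X : Type*) [NormedAddCommGroup X] [NormedSpace ℝ X] := StrongDual ℝ X

/-- Convexity for extended-real-valued functions. -/
def EConvexOn {E : Type*} [AddCommMonoid E] [Module ℝ E] (f : E → EReal) : Prop :=
  ∀ x y : E, ∀ a b : ℝ, 0 ≤ a → 0 ≤ b → a + b = 1 →
    f (a • x + b • y) ≤ (a : EReal) * f x + (b : EReal) * f y

/-- Monotonicity of a multivalued operator `T : X ⇉ X*`. -/
def IsMonotoneOp (T : X → Set (Dd X)) : Prop :=
  ∀ ⦃x y xs ys⦄, xs ∈ T x → ys ∈ T y → 0 ≤ (ys - xs) (y - x)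

/-- Maximal monotonicity of a multivalued operator `T : X ⇉ X*`. -/
def IsMaxMonotone (T : X → Set (Dd X)) : Prop :=
  IsMonotoneOp T ∧ ∀ x xs, (∀ y ys, ys ∈ T y → 0 ≤ (xs - ys) (x - y)) → xs ∈ T x

/-- Fenchel conjugate of a function on `X × X*`, evaluated on `X* × X`
(the space `X` identified with its image in `X**`). -/
def conj2 (F : X × Dd X → EReal) : Dd X × X → EReal :=
  fun p => ⨆ q : X × Dd X, ((p.1 q.1 + q.2 p.2 : ℝ) : EReal) - F q

/-- Fenchel conjugate of a function on `X`. -/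
def conj1 (f : X → EReal) : Dd X → EReal :=
  fun xs => ⨆ x : X, ((xs x : ℝ) : EReal) - f x

/-- `F` is a representative function of `T`: convex, lower semicontinuous,
everywhere above the duality product and coinciding with it on the graph of `T`. -/
def IsRepr (T : X → Set (Dd X)) (F : X × Dd X → EReal) : Prop :=
  EConvexOn F ∧ LowerSemicontinuous F ∧
  (∀ p : X × Dd X, ((p.2 p.1 : ℝ) : EReal) ≤ F p) ∧
  (∀ p : X × Dd X, p.2 ∈ T p.1 → F p = ((p.2 p.1 : ℝ) : EReal))

/-- `f̂(x, x*) = f(x, -x*)`. -/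
def hatF (F : X × Dd X → EReal) : X × Dd X → EReal := fun p => F (p.1, -p.2)

/-- Effective domain. -/
def edom {E : Type*} (F : E → EReal) : Set E := {p | F p ≠ ⊤}

/-- Infimal convolution. -/
def infConv {E : Type*} [AddCommGroup E] (g h : E → EReal) : E → EReal :=
  fun y => ⨅ u : E, g (y - u) + h u

/-- Exactness of the infimal convolution at a point. -/
def ExactAt {E : Type*} [AddCommGroup E] (g h : E → EReal) (y : E) : Prop :=
  ∃ u : E, infConv g h y = g (y - u) + h u

/-- Convex subdifferential of an extended-real-valued function (empty where the
value is not finite). -/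
def esubdiff (h : X → EReal) (x : X) : Set (Dd X) :=
  {xs | h x ≠ ⊤ ∧ h x ≠ ⊥ ∧ ∀ y, h x + ((xs (y - x) : ℝ) : EReal) ≤ h y}

/-- Reflexivity of a normed space. -/
def Reflexive' (X : Type*) [NormedAddCommGroup X] [NormedSpace ℝ X] : Prop :=
  Function.Surjective (NormedSpace.inclusionInDoubleDual ℝ X)

/-- The Fitzpatrick function of `T`. -/
def fitz (T : X → Set (Dd X)) : X × Dd X → EReal :=
  fun p => ⨆ q : {q : X × Dd X // q.2 ∈ T q.1},
    ((q.1.2 p.1 + p.2 q.1.1 - q.1.2 q.1.1 : ℝ) : EReal)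

/-- For a maximal monotone operator `T` on a Banach space `X` and any
representative function `F` of `T`, one has `F*(x*, x) ≥ ⟨x*, x⟩` for all `(x, x*)`. -/
theorem repr_conj_ge_pairing [CompleteSpace X]
    (T : X → Set (Dd X)) (hT : IsMaxMonotone T)
    (F : X × Dd X → EReal) (hF : IsRepr T F) :
    ∀ p : X × Dd X, ((p.2 p.1 : ℝ) : EReal) ≤ conj2 F (p.2, p.1) := by
  rintro ⟨x, xs⟩
  by_cases h : xs ∈ T x
  · have hFeq := hF.2.2.2 (x, xs) h
    have : ((xs x : ℝ) : EReal) ≤ ((xs x + xs x : ℝ) : EReal) - F (x, xs) := by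
      rw [hFeq, ← EReal.coe_sub]
      exact_mod_cast le_of_eq (by ring)
    exact this.trans (le_iSup (fun q : X × Dd X => ((xs q.1 + q.2 x : ℝ) : EReal) - F q) (x, xs))
  · have hex : ∃ y ys, ys ∈ T y ∧ ¬ 0 ≤ (xs - ys) (x - y) := by
      by_contra hc
      push_neg at hc
      exact h (hT.2 x xs fun y ys hy => hc y ys hy)
    obtain ⟨y, ys, hy, hneg⟩ := hex
    push_neg at hneg
    have hFeq := hF.2.2.2 (y, ys) hy
    have hlt : xs x < xs y + ys x - ys y := by
      have h2 : xs x - ys x < xs y - ys y := by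
        simpa [map_sub, ContinuousLinearMap.sub_apply] using hneg
      linarith
    have : ((xs x : ℝ) : EReal) ≤ ((xs y + ys x : ℝ) : EReal) - F (y, ys) := by
      rw [hFeq, ← EReal.coe_sub]
      exact_mod_cast le_of_lt (by linarith)
    exact this.trans (le_iSup (fun q : X × Dd X => ((xs q.1 + q.2 x : ℝ) : EReal) - F q) (y, ys))
end
end

section
/- Let T : X ⇉ X* be a maximal monotone operator on a reflexive Banach space X, let f_T be a representative function of T, and let (x, x*) ∈ X × X*. Then the following are equivalent: (a) (x, x*) ∈ G(T); (b) f_T(x, x*) = ⟨x*, x⟩; (c) f_T*(x*, x) = ⟨x*, x⟩. -/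
noncomputable section

open scoped Topology Pointwise

variable {X : Type*} [NormedAddCommGroup X] [NormedSpace ℝ X]

/-- Auxiliary: if `F` is convex, above the coupling, and equals the coupling at
`(x,xs)` and `(y,ys)`, then the monotonicity inequality holds between those points. -/
lemma repr_mono_aux (F : X × Dd X → EReal) (hconv : EConvexOn F)
    (hge : ∀ p : X × Dd X, ((p.2 p.1 : ℝ) : EReal) ≤ F p)
    {x y : X} {xs ys : Dd X} (hx : F (x, xs) = ((xs x : ℝ) : EReal))
    (hy : F (y, ys) = ((ys y : ℝ) : EReal)) : 0 ≤ (xs - ys) (x - y) := by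
  have h2 := hconv (x, xs) (y, ys) (1/2) (1/2) (by norm_num) (by norm_num) (by norm_num)
  rw [hx, hy] at h2
  have hpt : (1/2 : ℝ) • ((x, xs) : X × Dd X) + (1/2 : ℝ) • ((y, ys) : X × Dd X)
      = ((1/2 : ℝ) • x + (1/2 : ℝ) • y, (1/2 : ℝ) • xs + (1/2 : ℝ) • ys) := rfl
  rw [hpt] at h2
  have h3 := (hge ((1/2 : ℝ) • x + (1/2 : ℝ) • y, (1/2 : ℝ) • xs + (1/2 : ℝ) • ys)).trans h2
  rw [← EReal.coe_mul, ← EReal.coe_mul, ← EReal.coe_add, EReal.coe_le_coe_iff] at h3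
  simp only [ContinuousLinearMap.add_apply, ContinuousLinearMap.coe_smul',
    Pi.smul_apply, map_add, map_smul, smul_eq_mul] at h3
  simp only [ContinuousLinearMap.sub_apply, map_sub]
  nlinarith [h3]

/-- Auxiliary: if `F` is convex, above the coupling, and equals the coupling at
`(x,xs)`, then `F` dominates the affine function `⟨xs,·⟩ + ⟨·,x⟩ - ⟨xs,x⟩`. -/
lemma repr_fitz_aux (F : X × Dd X → EReal) (hconv : EConvexOn F)
    (hge : ∀ p : X × Dd X, ((p.2 p.1 : ℝ) : EReal) ≤ F p)
    {x : X} {xs : Dd X} (hx : F (x, xs) = ((xs x : ℝ) : EReal)) (q : X × Dd X) :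
    ((xs q.1 + q.2 x - xs x : ℝ) : EReal) ≤ F q := by
  obtain ⟨q1, q2⟩ := q
  rcases eq_or_ne (F (q1, q2)) ⊤ with htop | htop
  · rw [htop]; exact le_top
  have hbot : F (q1, q2) ≠ ⊥ := fun h => by simpa [h] using hge (q1, q2)
  set r : ℝ := (F (q1, q2)).toReal with hr
  have hFr : F (q1, q2) = (r : EReal) := (EReal.coe_toReal htop hbot).symm
  -- real inequality for each t ∈ (0,1)
  have hineq : ∀ t : ℝ, t ∈ Set.Ioo (0:ℝ) 1 →
      t * q2 q1 + (1 - t) * (xs q1 + q2 x - xs x) ≤ r := by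
    intro t ht
    have h2 := hconv (q1, q2) (x, xs) t (1 - t) (le_of_lt ht.1) (by linarith [ht.2])
      (by ring)
    rw [hFr, hx] at h2
    have hpt : t • ((q1, q2) : X × Dd X) + (1 - t) • ((x, xs) : X × Dd X)
        = (t • q1 + (1 - t) • x, t • q2 + (1 - t) • xs) := rfl
    rw [hpt] at h2
    have h3 := (hge (t • q1 + (1 - t) • x, t • q2 + (1 - t) • xs)).trans h2
    rw [← EReal.coe_mul, ← EReal.coe_mul, ← EReal.coe_add, EReal.coe_le_coe_iff] at h3
    simp only [ContinuousLinearMap.add_apply, ContinuousLinearMap.coe_smul',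
      Pi.smul_apply, map_add, map_smul, smul_eq_mul] at h3
    have ht0 : 0 < t := ht.1
    nlinarith [h3, mul_pos ht0 ht0, sq_nonneg t, sq_nonneg (1 - t)]
  -- take the limit t → 0⁺
  have hlim : Filter.Tendsto (fun t : ℝ => t * q2 q1 + (1 - t) * (xs q1 + q2 x - xs x))
      (𝓝[>] (0:ℝ)) (𝓝 (xs q1 + q2 x - xs x)) := by
    have hc : Continuous (fun t : ℝ => t * q2 q1 + (1 - t) * (xs q1 + q2 x - xs x)) :=
      (continuous_id.mul continuous_const).add
        ((continuous_const.sub continuous_id).mul continuous_const)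
    have := hc.tendsto 0
    simp only [zero_mul, sub_zero, one_mul, zero_add] at this
    exact this.mono_left nhdsWithin_le_nhds
  have hev : ∀ᶠ t in 𝓝[>] (0:ℝ), t * q2 q1 + (1 - t) * (xs q1 + q2 x - xs x) ≤ r := by
    filter_upwards [Ioo_mem_nhdsGT_of_mem (by norm_num : (0:ℝ) ∈ Set.Ico (0:ℝ) 1)]
      with t ht using hineq t ht
  have : xs q1 + q2 x - xs x ≤ r := le_of_tendsto hlim hev
  calc ((xs q1 + q2 x - xs x : ℝ) : EReal) ≤ (r : EReal) := EReal.coe_le_coe_iff.mpr this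
    _ = F (q1, q2) := hFr.symm

/-- for a maximal monotone `T` on a reflexive Banach space with
representative function `F`: `(x,x*) ∈ G(T)` ↔ `F(x,x*) = ⟨x*,x⟩` ↔ `F*(x*,x) = ⟨x*,x⟩`. -/
theorem graph_iff_repr_eq_iff_conj_eq [CompleteSpace X] (hX : Reflexive' X)
    (T : X → Set (Dd X)) (hT : IsMaxMonotone T)
    (F : X × Dd X → EReal) (hF : IsRepr T F) (x : X) (xs : Dd X) :
    (xs ∈ T x ↔ F (x, xs) = ((xs x : ℝ) : EReal)) ∧
    (xs ∈ T x ↔ conj2 F (xs, x) = ((xs x : ℝ) : EReal)) := by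
  obtain ⟨hconv, _hlsc, hge, hgraph⟩ := hF
  -- (b) → (a)
  have hba : F (x, xs) = ((xs x : ℝ) : EReal) → xs ∈ T x := by
    intro hb
    refine hT.2 x xs (fun y ys hy => ?_)
    exact repr_mono_aux F hconv hge hb (hgraph (y, ys) hy)
  -- (a) → (c)
  have hac : xs ∈ T x → conj2 F (xs, x) = ((xs x : ℝ) : EReal) := by
    intro ha
    have hb : F (x, xs) = ((xs x : ℝ) : EReal) := hgraph (x, xs) ha
    apply le_antisymm
    · refine iSup_le (fun q => ?_)
      rcases eq_or_ne (F q) ⊤ with htop | htop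
      · rw [htop]
        exact (EReal.sub_top _).le.trans bot_le
      · have hbot : F q ≠ ⊥ := fun h => by simpa [h] using hge q
        have hFr : F q = ((F q).toReal : EReal) := (EReal.coe_toReal htop hbot).symm
        have hkey := repr_fitz_aux F hconv hge hb q
        rw [hFr] at hkey ⊢
        rw [← EReal.coe_sub, EReal.coe_le_coe_iff]
        rw [EReal.coe_le_coe_iff] at hkey
        linarith
    · have := le_iSup (fun q : X × Dd X => ((xs q.1 + q.2 x : ℝ) : EReal) - F q) (x, xs)
      refine le_trans ?_ this
      rw [hb, ← EReal.coe_sub, EReal.coe_le_coe_iff]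
      simp
  -- (c) → (a)
  have hca : conj2 F (xs, x) = ((xs x : ℝ) : EReal) → xs ∈ T x := by
    intro hc
    refine hT.2 x xs (fun y ys hy => ?_)
    have hterm := le_iSup (fun q : X × Dd X => ((xs q.1 + q.2 x : ℝ) : EReal) - F q) (y, ys)
    rw [show (⨆ q : X × Dd X, ((xs q.1 + q.2 x : ℝ) : EReal) - F q) = conj2 F (xs, x) from rfl,
      hc, hgraph (y, ys) hy, ← EReal.coe_sub, EReal.coe_le_coe_iff] at hterm
    simp only [ContinuousLinearMap.sub_apply, map_sub]
    linarith
  exact ⟨⟨fun h => hgraph (x, xs) h, hba⟩, ⟨hac, hca⟩⟩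
end
end

section
/- Let T : X ⇉ X* be a maximal monotone operator. Then the Fitzpatrick function φ_T(x, x*) = sup{⟨y*, x⟩ + ⟨x*, y⟩ − ⟨y*, y⟩ : y* ∈ Ty} is the smallest element of the Fitzpatrick family of representative functions of T: every representative function f_T satisfies f_T ≥ φ_T pointwise. -/
noncomputable section

open scoped Topology Pointwise

variable {X : Type*} [NormedAddCommGroup X] [NormedSpace ℝ X]

/-- the Fitzpatrick function is the smallest representative function. -/
theorem fitzpatrick_smallest
    (T : X → Set (Dd X)) (hT : IsMaxMonotone T)
    (F : X × Dd X → EReal) (hF : IsRepr T F) :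
    ∀ p : X × Dd X, fitz T p ≤ F p := by
  obtain ⟨hconv, _, hge, heq⟩ := hF
  rintro ⟨x, xs⟩
  apply iSup_le
  rintro ⟨⟨y, ys⟩, hy⟩
  by_cases hFt : F (x, xs) = ⊤
  · simp [hFt]
  · have hFb : F (x, xs) ≠ ⊥ :=
      ne_of_gt (lt_of_lt_of_le (EReal.bot_lt_coe _) (hge (x, xs)))
    set r := (F (x, xs)).toReal with hrdef
    have hr : F (x, xs) = (r : EReal) := (EReal.coe_toReal hFt hFb).symm
    rw [hr]
    simp only
    rw [EReal.coe_le_coe_iff]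
    have key : ∀ t : ℝ, 0 < t → t ≤ 1 →
        (1 - t) * (ys x + xs y - ys y) + t * (xs x) ≤ r := by
      intro t ht0 ht1
      have h := hconv (y, ys) (x, xs) (1 - t) t (by linarith) ht0.le (by ring)
      rw [heq (y, ys) hy, hr] at h
      have h2 := hge ((1 - t) • (y, ys) + t • (x, xs))
      have h3 : (((((1 - t) • (y, ys) + t • (x, xs)) : X × Dd X).2
            (((1 - t) • (y, ys) + t • (x, xs) : X × Dd X).1) : ℝ) : EReal)
          ≤ ((1 - t) * (ys y) + t * r : ℝ) := by
        refine le_trans h2 (le_trans h ?_)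
        rw [EReal.coe_add, EReal.coe_mul, EReal.coe_mul]
      rw [EReal.coe_le_coe_iff] at h3
      simp only [Prod.smul_fst, Prod.smul_snd, Prod.fst_add, Prod.snd_add,
        ContinuousLinearMap.add_apply, ContinuousLinearMap.coe_smul',
        Pi.smul_apply, map_add, map_smul, smul_eq_mul] at h3
      nlinarith [h3]
    have key2 : ∀ ε : ℝ, 0 < ε → ys x + xs y - ys y ≤ r + ε := by
      intro ε hε
      set L := ys x + xs y - ys y with hL
      set D := |xs x - L| + 1 with hD
      have hD0 : 0 < D := by positivity
      set t := min 1 (ε / D) with ht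
      have ht0 : 0 < t := lt_min one_pos (by positivity)
      have ht1 : t ≤ 1 := min_le_left _ _
      have h := key t ht0 ht1
      have htD : t * |xs x - L| ≤ ε := by
        have h1 : t ≤ ε / D := min_le_right _ _
        have h2 : t * |xs x - L| ≤ t * D := by
          apply mul_le_mul_of_nonneg_left _ ht0.le
          rw [hD]; linarith
        calc t * |xs x - L| ≤ t * D := h2
          _ ≤ (ε / D) * D := mul_le_mul_of_nonneg_right h1 hD0.le
          _ = ε := div_mul_cancel₀ _ hD0.ne'
      have habs : -(t * |xs x - L|) ≤ t * (xs x - L) := by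
        rw [neg_le]
        calc -(t * (xs x - L)) = t * (-(xs x - L)) := by ring
          _ ≤ t * |xs x - L| := by
              apply mul_le_mul_of_nonneg_left (neg_le_abs _) ht0.le
      have : (1 - t) * L + t * (xs x) = L + t * (xs x - L) := by ring
      rw [this] at h
      linarith
    exact le_of_forall_pos_le_add key2
end
end

section
/- Let X be a reflexive Banach space, S, T : X ⇉ X* maximal monotone, p ∈ X, p* ∈ X*. Suppose there exist representative functions f_S ∈ F_S and f_T ∈ F_T with dom f_S ∩ (dom f̂_T + (p, p*)) ≠ ∅ such that the function f_S* □ (f̂_T* + ⟨(p*, p), (·, ·)⟩) is lower semicontinuous at (p*, p) and exact at (p*, p). Then p* ∈ R(S(p + ·) + T(·)), i.e., there exists x ∈ X with p* ∈ S(p + x) + T(x). -/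
noncomputable section

open scoped Topology Pointwise

variable {X : Type*} [NormedAddCommGroup X] [NormedSpace ℝ X]

-- ==== basic EReal helpers ====

lemma aux_le_of_forall_lt {a b : EReal} (h : ∀ c : ℝ, (c : EReal) < a → (c : EReal) ≤ b) :
    a ≤ b := by
  by_contra hab
  push_neg at hab
  obtain ⟨y, hy1, hy2⟩ := EReal.exists_between_coe_real hab
  exact absurd (h y hy2) (not_le.2 hy1)

lemma aux_exists_real_lt (x : EReal) {t : ℝ} (h : x < (t : EReal)) :
    ∃ u : ℝ, x ≤ (u : EReal) ∧ u < t := by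
  induction x using EReal.rec with
  | bot => exact ⟨t - 1, bot_le, by linarith⟩
  | coe v => exact ⟨v, le_rfl, by exact_mod_cast h⟩
  | top => exact absurd h (by simp)

lemma aux_coe_sub_le {x : EReal} {A r : ℝ} (h : ((A + r : ℝ) : EReal) ≤ x) :
    ((A : ℝ) : EReal) - x ≤ ((-r : ℝ) : EReal) := by
  induction x using EReal.rec with
  | bot => simp at h
  | coe v =>
      rw [← EReal.coe_sub, EReal.coe_le_coe_iff]
      have : A + r ≤ v := by exact_mod_cast h
      linarith
  | top =>
      rw [show ((A : ℝ) : EReal) - ⊤ = ⊥ by rfl]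
      exact bot_le

lemma aux_squeeze {x y : EReal} {a b : ℝ} (hx : (a : EReal) ≤ x) (hy : (b : EReal) ≤ y)
    (hxy : x + y ≤ ((a + b : ℝ) : EReal)) : x = (a : EReal) ∧ y = (b : EReal) := by
  have hxt : x ≠ ⊤ := by
    rintro rfl
    rw [EReal.top_add_of_ne_bot (by rintro rfl; simp at hy)] at hxy
    exact absurd (top_le_iff.mp hxy) (EReal.coe_ne_top _)
  have hyt : y ≠ ⊤ := by
    rintro rfl
    rw [EReal.add_top_of_ne_bot (by rintro rfl; simp at hx)] at hxy
    exact absurd (top_le_iff.mp hxy) (EReal.coe_ne_top _)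
  lift x to ℝ using ⟨hxt, by rintro rfl; simp at hx⟩ with vx
  lift y to ℝ using ⟨hyt, by rintro rfl; simp at hy⟩ with vy
  rw [← EReal.coe_add, EReal.coe_le_coe_iff] at hxy
  rw [EReal.coe_le_coe_iff] at hx hy
  constructor <;> · norm_cast; linarith

-- ==== convexity of epigraphs ====

lemma aux_epi_convex {Y : Type*} [AddCommGroup Y] [Module ℝ Y] {f : Y → EReal}
    (hf : EConvexOn f) : Convex ℝ {yt : Y × ℝ | f yt.1 ≤ (yt.2 : EReal)} := by
  rintro ⟨y1, t1⟩ h1 ⟨y2, t2⟩ h2 a b ha hb hab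
  simp only [Set.mem_setOf_eq] at h1 h2 ⊢
  show f (a • y1 + b • y2) ≤ ((a * t1 + b * t2 : ℝ) : EReal)
  calc f (a • y1 + b • y2) ≤ (a : EReal) * f y1 + (b : EReal) * f y2 := hf y1 y2 a b ha hb hab
    _ ≤ (a : EReal) * (t1 : EReal) + (b : EReal) * (t2 : EReal) :=
        add_le_add (mul_le_mul_of_nonneg_left h1 (EReal.coe_nonneg.2 ha))
          (mul_le_mul_of_nonneg_left h2 (EReal.coe_nonneg.2 hb))
    _ = ((a * t1 + b * t2 : ℝ) : EReal) := by
        rw [← EReal.coe_mul, ← EReal.coe_mul, ← EReal.coe_add]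

lemma aux_strict_epi_convex {Y : Type*} [AddCommGroup Y] [Module ℝ Y] {f : Y → EReal}
    (hf : EConvexOn f) : Convex ℝ {yt : Y × ℝ | f yt.1 < (yt.2 : EReal)} := by
  rintro ⟨y1, t1⟩ h1 ⟨y2, t2⟩ h2 a b ha hb hab
  simp only [Set.mem_setOf_eq] at h1 h2 ⊢
  obtain ⟨u1, hu1, hu1'⟩ := aux_exists_real_lt _ h1
  obtain ⟨u2, hu2, hu2'⟩ := aux_exists_real_lt _ h2
  show f (a • y1 + b • y2) < ((a * t1 + b * t2 : ℝ) : EReal)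
  have key : (a * u1 + b * u2 : ℝ) < a * t1 + b * t2 := by
    rcases ha.eq_or_lt with rfl | ha'
    · have hb1 : b = 1 := by linarith
      simp [hb1, hu2']
    · nlinarith [mul_le_mul_of_nonneg_left hu2'.le hb]
  calc f (a • y1 + b • y2) ≤ (a : EReal) * f y1 + (b : EReal) * f y2 := hf y1 y2 a b ha hb hab
    _ ≤ (a : EReal) * (u1 : EReal) + (b : EReal) * (u2 : EReal) :=
        add_le_add (mul_le_mul_of_nonneg_left hu1 (EReal.coe_nonneg.2 ha))
          (mul_le_mul_of_nonneg_left hu2 (EReal.coe_nonneg.2 hb))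
    _ = ((a * u1 + b * u2 : ℝ) : EReal) := by
        rw [← EReal.coe_mul, ← EReal.coe_mul, ← EReal.coe_add]
    _ < ((a * t1 + b * t2 : ℝ) : EReal) := by exact_mod_cast key
-- ==== pairings and reflexivity ====

def pairA (z : X × Dd X) : (Dd X × X) →L[ℝ] ℝ :=
  ((NormedSpace.inclusionInDoubleDual ℝ X z.1).comp (ContinuousLinearMap.fst ℝ (Dd X) X)) +
    (z.2.comp (ContinuousLinearMap.snd ℝ (Dd X) X))

lemma pairA_apply (z : X × Dd X) (u : Dd X × X) : pairA z u = u.1 z.1 + z.2 u.2 := rfl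

def pairB (z : Dd X × X) : (X × Dd X) →L[ℝ] ℝ :=
  (z.1.comp (ContinuousLinearMap.fst ℝ X (Dd X))) +
    ((NormedSpace.inclusionInDoubleDual ℝ X z.2).comp (ContinuousLinearMap.snd ℝ X (Dd X)))

lemma pairB_apply (z : Dd X × X) (q : X × Dd X) : pairB z q = z.1 q.1 + q.2 z.2 := rfl

lemma pairA_surj (hX : Reflexive' X) (φ : (Dd X × X) →L[ℝ] ℝ) : ∃ z, pairA z = φ := by
  obtain ⟨x, hx⟩ := hX (φ.comp (ContinuousLinearMap.inl ℝ (Dd X) X))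
  refine ⟨(x, φ.comp (ContinuousLinearMap.inr ℝ (Dd X) X)), ContinuousLinearMap.ext fun u => ?_⟩
  have h1 : u.1 x = φ (u.1, 0) := by
    have := congrArg (fun g => g u.1) hx
    simpa using this
  have : φ u = φ (u.1, 0) + φ (0, u.2) := by
    rw [← map_add]; congr 1; simp
  rw [pairA_apply, this, ← h1]
  rfl

lemma pairB_surj (hX : Reflexive' X) (φ : (X × Dd X) →L[ℝ] ℝ) : ∃ z, pairB z = φ := by
  obtain ⟨x, hx⟩ := hX (φ.comp (ContinuousLinearMap.inr ℝ X (Dd X)))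
  refine ⟨(φ.comp (ContinuousLinearMap.inl ℝ X (Dd X)), x), ContinuousLinearMap.ext fun q => ?_⟩
  have h1 : q.2 x = φ (0, q.2) := by
    have := congrArg (fun g => g q.2) hx
    simpa using this
  have : φ q = φ (q.1, 0) + φ (0, q.2) := by
    rw [← map_add]; congr 1; simp
  rw [pairB_apply, this, ← h1]
  rfl

-- ==== conj2 basics ====

lemma conj2_term_le (F : X × Dd X → EReal) (u : Dd X × X) (q : X × Dd X) :
    ((u.1 q.1 + q.2 u.2 : ℝ) : EReal) - F q ≤ conj2 F u :=
  le_iSup (fun q : X × Dd X => ((u.1 q.1 + q.2 u.2 : ℝ) : EReal) - F q) q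

lemma econvex_conj2 (F : X × Dd X → EReal) : EConvexOn (conj2 F) := by
  intro p1 p2 a b ha hb hab
  refine iSup_le fun q => ?_
  have hpair : ((a • p1 + b • p2).1 q.1 + q.2 ((a • p1 + b • p2).2) : ℝ)
      = a * (p1.1 q.1 + q.2 p1.2) + b * (p2.1 q.1 + q.2 p2.2) := by
    simp only [Prod.fst_add, Prod.snd_add, Prod.smul_fst, Prod.smul_snd,
      ContinuousLinearMap.add_apply, ContinuousLinearMap.coe_smul',
      Pi.smul_apply, smul_eq_mul, map_add, map_smul]
    ring
  set A1 := p1.1 q.1 + q.2 p1.2 with hA1def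
  set A2 := p2.1 q.1 + q.2 p2.2 with hA2def
  have hA1 : ((A1 : ℝ) : EReal) - F q ≤ conj2 F p1 := conj2_term_le F p1 q
  have hA2 : ((A2 : ℝ) : EReal) - F q ≤ conj2 F p2 := conj2_term_le F p2 q
  rw [hpair]
  by_cases hqt : F q = ⊤
  · rw [hqt, show ((a * A1 + b * A2 : ℝ) : EReal) - ⊤ = ⊥ from rfl]
    exact bot_le
  by_cases hqb : F q = ⊥
  · rw [hqb] at hA1 hA2 ⊢
    have h1t : conj2 F p1 = ⊤ := top_le_iff.mp (le_trans (by rfl :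
      (⊤:EReal) ≤ ((A1:ℝ):EReal) - ⊥) hA1)
    have h2t : conj2 F p2 = ⊤ := top_le_iff.mp (le_trans (by rfl :
      (⊤:EReal) ≤ ((A2:ℝ):EReal) - ⊥) hA2)
    rw [h1t, h2t]
    rcases ha.eq_or_lt with rfl | ha'
    · have hb1 : b = 1 := by linarith
      simp [hb1]
    · rw [EReal.coe_mul_top_of_pos ha', EReal.top_add_of_ne_bot]
      · exact le_top
      · rcases hb.eq_or_lt with rfl | hb'
        · simp
        · rw [EReal.coe_mul_top_of_pos hb']; exact top_ne_bot 
  · lift F q to ℝ using ⟨hqt, hqb⟩ with v hv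
    calc ((a * A1 + b * A2 : ℝ) : EReal) - (v : EReal)
        = ((a * (A1 - v) + b * (A2 - v) : ℝ) : EReal) := by
          rw [← EReal.coe_sub]; norm_cast
          linear_combination v * hab
      _ = (a : EReal) * ((A1 - v : ℝ) : EReal) + (b : EReal) * ((A2 - v : ℝ) : EReal) := by
          rw [← EReal.coe_mul, ← EReal.coe_mul, ← EReal.coe_add]
      _ ≤ (a : EReal) * conj2 F p1 + (b : EReal) * conj2 F p2 := by
          refine add_le_add (mul_le_mul_of_nonneg_left ?_ (EReal.coe_nonneg.2 ha))
            (mul_le_mul_of_nonneg_left ?_ (EReal.coe_nonneg.2 hb))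
          · rw [EReal.coe_sub]; exact hA1
          · rw [EReal.coe_sub]; exact hA2

-- ==== closed epigraph ====

lemma aux_epi_closed {Y : Type*} [TopologicalSpace Y] {f : Y → EReal}
    (hf : LowerSemicontinuous f) :
    IsClosed {yt : Y × ℝ | f yt.1 ≤ (yt.2 : EReal)} := by
  rw [← isOpen_compl_iff, isOpen_iff_mem_nhds]
  rintro ⟨y, t⟩ hyt
  simp only [Set.mem_compl_iff, Set.mem_setOf_eq, not_le] at hyt
  obtain ⟨d, hd1, hd2⟩ := EReal.exists_between_coe_real hyt
  have h1 : {y' | (d : EReal) < f y'} ∈ 𝓝 y := hf y d hd2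
  have h2 : Set.Iio d ∈ 𝓝 t := Iio_mem_nhds (by exact_mod_cast hd1)
  rw [nhds_prod_eq]
  filter_upwards [Filter.prod_mem_prod h1 h2] with yt hmem
  simp only [Set.mem_compl_iff, Set.mem_setOf_eq, not_le]
  exact lt_trans (by exact_mod_cast hmem.2) hmem.1
-- ==== decomposition of functionals on Y × ℝ ====

lemma aux_clm_decomp {Y : Type*} [NormedAddCommGroup Y] [NormedSpace ℝ Y]
    (Φ : (Y × ℝ) →L[ℝ] ℝ) (y : Y) (t : ℝ) :
    Φ (y, t) = Φ (y, 0) + t * Φ (0, 1) := by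
  have : ((y, t) : Y × ℝ) = (y, 0) + t • ((0 : Y), (1 : ℝ)) := by
    refine Prod.ext ?_ ?_ <;> simp
  rw [this, map_add, map_smul, smul_eq_mul]

-- ==== existence of continuous affine minorants ====

lemma aux_exists_minorant {Y : Type*} [NormedAddCommGroup Y] [NormedSpace ℝ Y] {f : Y → EReal}
    (hconv : EConvexOn f) (hlsc : LowerSemicontinuous f) (hbot : ∀ y, f y ≠ ⊥)
    {y₁ : Y} (hy₁ : f y₁ ≠ ⊤) :
    ∃ (φ : Y →L[ℝ] ℝ) (r : ℝ), ∀ y, ((φ y + r : ℝ) : EReal) ≤ f y := by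
  have hcoe1 : ((f y₁).toReal : EReal) = f y₁ := EReal.coe_toReal hy₁ (hbot y₁)
  have hx₀ : ((y₁, (f y₁).toReal - 1) : Y × ℝ) ∉ {yt : Y × ℝ | f yt.1 ≤ (yt.2 : EReal)} := by
    simp only [Set.mem_setOf_eq, not_le]
    calc ((((f y₁).toReal - 1 : ℝ)) : EReal) < (((f y₁).toReal : ℝ) : EReal) := by
          exact_mod_cast sub_one_lt _
      _ = f y₁ := hcoe1
  obtain ⟨Φ, α, hΦx, hΦepi⟩ :=
    geometric_hahn_banach_point_closed (aux_epi_convex hconv) (aux_epi_closed hlsc) hx₀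
  set s : ℝ := Φ (0, 1) with hs
  have hmem : ∀ t : ℝ, (f y₁).toReal ≤ t → ((y₁, t) : Y × ℝ) ∈
      {yt : Y × ℝ | f yt.1 ≤ (yt.2 : EReal)} := by
    intro t ht
    simp only [Set.mem_setOf_eq]
    calc f y₁ = (((f y₁).toReal : ℝ) : EReal) := hcoe1.symm
      _ ≤ (t : EReal) := by exact_mod_cast ht
  have hs_pos : 0 < s := by
    rcases lt_trichotomy s 0 with hneg | hzero | hpos
    · exfalso
      set t : ℝ := max ((f y₁).toReal) ((α - 1 - Φ (y₁, 0)) / s) with ht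
      have h1 : α < Φ (y₁, t) := hΦepi _ (hmem t (le_max_left _ _))
      rw [aux_clm_decomp] at h1
      have h2 : t * s ≤ α - 1 - Φ (y₁, 0) :=
        ((div_le_iff_of_neg hneg).mp (le_max_right _ _))
      linarith
    · exfalso
      have h1 : α < Φ (y₁, (f y₁).toReal) := hΦepi _ (hmem _ le_rfl)
      rw [aux_clm_decomp] at h1
      rw [aux_clm_decomp] at hΦx
      rw [← hs, hzero] at h1 hΦx
      linarith
    · exact hpos
  refine ⟨(-(s⁻¹)) • (Φ.comp (ContinuousLinearMap.inl ℝ Y ℝ)), α / s, fun y => ?_⟩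
  by_cases hy : f y = ⊤
  · rw [hy]; exact le_top
  have h1 : α < Φ (y, (f y).toReal) := by
    refine hΦepi _ ?_
    simp only [Set.mem_setOf_eq]
    exact (EReal.coe_toReal hy (hbot y)).ge
  rw [aux_clm_decomp, ← hs] at h1
  have hΦy : ((-(s⁻¹)) • (Φ.comp (ContinuousLinearMap.inl ℝ Y ℝ))) y = -(s⁻¹) * Φ (y, 0) := rfl
  have key : (α - Φ (y, 0)) / s ≤ (f y).toReal := by
    rw [div_le_iff₀ hs_pos]; nlinarith
  have hval : -(s⁻¹) * Φ (y, 0) + α / s = (α - Φ (y, 0)) / s := by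
    field_simp; ring
  calc ((((-(s⁻¹)) • (Φ.comp (ContinuousLinearMap.inl ℝ Y ℝ))) y + α / s : ℝ) : EReal)
      = (((α - Φ (y, 0)) / s : ℝ) : EReal) := by rw [hΦy, hval]
    _ ≤ (((f y).toReal : ℝ) : EReal) := by exact_mod_cast key
    _ = f y := EReal.coe_toReal hy (hbot y)
-- ==== pointwise Fenchel-Moreau via Hahn-Banach separation ====

lemma aux_FM {Y : Type*} [NormedAddCommGroup Y] [NormedSpace ℝ Y] {Z : Type*}
    (pair : Z → (Y →L[ℝ] ℝ)) (hsurj : ∀ φ : Y →L[ℝ] ℝ, ∃ z, pair z = φ)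
    {f : Y → EReal} (hepi : Convex ℝ {yt : Y × ℝ | f yt.1 < (yt.2 : EReal)})
    {y₀ : Y} (hlsc : LowerSemicontinuousAt f y₀)
    {z₀ : Z} {r₀ : ℝ} (hmin : ∀ y, ((pair z₀ y + r₀ : ℝ) : EReal) ≤ f y)
    {c : ℝ} (hc : (c : EReal) < f y₀) :
    ∃ z r, (∀ y, ((pair z y + r : ℝ) : EReal) ≤ f y) ∧ c ≤ pair z y₀ + r := by
  have hbot : ∀ y, f y ≠ ⊥ := fun y hy => by
    have h := hmin y; rw [hy, le_bot_iff] at h; exact EReal.coe_ne_bot _ h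
  by_cases htop : ∀ y, f y = ⊤
  · exact ⟨z₀, c - pair z₀ y₀, fun y => by rw [htop y]; exact le_top, by linarith⟩
  push_neg at htop; obtain ⟨y₁, hy₁⟩ := htop
  have hev : ∀ᶠ y in 𝓝 y₀, (c : EReal) < f y := hlsc c hc
  obtain ⟨ε, hε, hball⟩ := Metric.eventually_nhds_iff.mp hev
  have hdisj : Disjoint (Metric.ball y₀ ε ×ˢ Set.Iio c)
      {yt : Y × ℝ | f yt.1 < (yt.2 : EReal)} := by
    rw [Set.disjoint_left]
    rintro ⟨y, t⟩ hUm hAm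
    simp only [Set.mem_prod, Set.mem_Iio, Metric.mem_ball] at hUm
    simp only [Set.mem_setOf_eq] at hAm
    have h1 : (c : EReal) < f y := hball hUm.1
    have h2 : f y < (c : EReal) := lt_trans hAm (by exact_mod_cast hUm.2)
    exact absurd (lt_trans h1 h2) (lt_irrefl _)
  obtain ⟨Φ, α, hU, hA⟩ := geometric_hahn_banach_open
    ((convex_ball y₀ ε).prod (convex_Iio c)) (Metric.isOpen_ball.prod isOpen_Iio) hepi hdisj
  set s : ℝ := Φ (0, 1) with hs
  have hy₁r : ((f y₁).toReal : EReal) = f y₁ := EReal.coe_toReal hy₁ (hbot y₁)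
  have hAmem : ∀ t : ℝ, (f y₁).toReal < t → α ≤ Φ (y₁, t) := by
    intro t ht
    refine hA _ ?_
    simp only [Set.mem_setOf_eq]
    calc f y₁ = _ := hy₁r.symm
      _ < (t : EReal) := by exact_mod_cast ht
  have hs0 : 0 ≤ s := by
    by_contra hneg; push_neg at hneg
    set t : ℝ := max ((f y₁).toReal + 1) ((α - 1 - Φ (y₁, 0)) / s) with ht
    have h1 : α ≤ Φ (y₁, t) := hAmem t (lt_of_lt_of_le (by linarith) (le_max_left _ _))
    rw [aux_clm_decomp, ← hs] at h1
    have h2 : t * s ≤ α - 1 - Φ (y₁, 0) := (div_le_iff_of_neg hneg).mp (le_max_right _ _)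
    linarith
  have hy₀U : ∀ t : ℝ, t < c → Φ (y₀, t) < α := by
    intro t ht
    refine hU _ ?_
    simp only [Set.mem_prod, Set.mem_Iio, Metric.mem_ball]
    exact ⟨by simpa using hε, ht⟩
  rcases hs0.eq_or_lt with hs0' | hs_pos
  · -- vertical separating functional
    have hΦdom : ∀ y, f y ≠ ⊤ → α ≤ Φ (y, 0) := by
      intro y hy
      have h := hA (y, (f y).toReal + 1) (by
        simp only [Set.mem_setOf_eq]
        calc f y = (((f y).toReal : ℝ) : EReal) := (EReal.coe_toReal hy (hbot y)).symm
          _ < _ := by exact_mod_cast lt_add_one _)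
      rw [aux_clm_decomp, ← hs, ← hs0'] at h
      linarith
    have hy₀Φ : Φ (y₀, 0) < α := by
      have h := hy₀U (c - 1) (by linarith)
      rw [aux_clm_decomp, ← hs, ← hs0'] at h
      linarith
    set δ : ℝ := α - Φ (y₀, 0) with hδ
    have hδpos : 0 < δ := by rw [hδ]; linarith
    set lam : ℝ := max 0 ((c - (pair z₀ y₀ + r₀)) / δ) with hlam
    have hlam0 : 0 ≤ lam := le_max_left _ _
    obtain ⟨z, hz⟩ := hsurj (pair z₀ - lam • (Φ.comp (ContinuousLinearMap.inl ℝ Y ℝ)))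
    have hzval : ∀ y, pair z y = pair z₀ y - lam * Φ (y, 0) := by
      intro y; rw [hz]; simp
    refine ⟨z, r₀ + lam * α, fun y => ?_, ?_⟩
    · by_cases hy : f y = ⊤
      · rw [hy]; exact le_top
      have h1 : pair z₀ y + r₀ ≤ (f y).toReal := by
        have h := hmin y
        rw [← EReal.coe_toReal hy (hbot y), EReal.coe_le_coe_iff] at h; exact h
      have h2 : α ≤ Φ (y, 0) := hΦdom y hy
      have h3 : pair z y + (r₀ + lam * α) ≤ (f y).toReal := by
        rw [hzval]; nlinarith
      calc ((pair z y + (r₀ + lam * α) : ℝ) : EReal) ≤ (((f y).toReal : ℝ) : EReal) := by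
            exact_mod_cast h3
        _ = f y := EReal.coe_toReal hy (hbot y)
    · rw [hzval]
      have h3 : (c - (pair z₀ y₀ + r₀)) / δ ≤ lam := le_max_right _ _
      rw [div_le_iff₀ hδpos] at h3
      rw [hδ] at h3
      nlinarith
  · -- nonvertical separating functional
    obtain ⟨z, hz⟩ := hsurj ((-(s⁻¹)) • (Φ.comp (ContinuousLinearMap.inl ℝ Y ℝ)))
    have hzval : ∀ y, pair z y = -(s⁻¹) * Φ (y, 0) := by intro y; rw [hz]; simp
    have hfrac : ∀ y : Y, -(s⁻¹) * Φ (y, 0) + α / s = (α - Φ (y, 0)) / s := by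
      intro y; field_simp; ring
    refine ⟨z, α / s, fun y => ?_, ?_⟩
    · by_cases hy : f y = ⊤
      · rw [hy]; exact le_top
      have hkey : (α - Φ (y, 0)) / s ≤ (f y).toReal := by
        by_contra hlt; push_neg at hlt
        set t : ℝ := ((f y).toReal + (α - Φ (y, 0)) / s) / 2 with htdef
        have ht1 : (f y).toReal < t := by rw [htdef]; linarith
        have ht2 : t < (α - Φ (y, 0)) / s := by rw [htdef]; linarith
        have h1 : α ≤ Φ (y, t) := hA _ (by
          simp only [Set.mem_setOf_eq]
          calc f y = (((f y).toReal : ℝ) : EReal) := (EReal.coe_toReal hy (hbot y)).symm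
            _ < _ := by exact_mod_cast ht1)
        rw [aux_clm_decomp, ← hs] at h1
        rw [lt_div_iff₀ hs_pos] at ht2
        linarith
      have h3 : pair z y + α / s ≤ (f y).toReal := by
        rw [hzval, hfrac]; exact hkey
      calc ((pair z y + α / s : ℝ) : EReal) ≤ (((f y).toReal : ℝ) : EReal) := by
            exact_mod_cast h3
        _ = f y := EReal.coe_toReal hy (hbot y)
    · have hkey : c ≤ (α - Φ (y₀, 0)) / s := by
        by_contra hlt; push_neg at hlt
        set t : ℝ := ((α - Φ (y₀, 0)) / s + c) / 2 with htdef
        have ht1 : t < c := by rw [htdef]; linarith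
        have ht2 : (α - Φ (y₀, 0)) / s < t := by rw [htdef]; linarith
        have h1 := hy₀U t ht1
        rw [aux_clm_decomp, ← hs] at h1
        rw [div_lt_iff₀ hs_pos] at ht2
        linarith
      rw [hzval, hfrac]; exact hkey
-- ==== representative function facts ====

lemma aux_conj2_ge {T : X → Set (Dd X)} (hT : IsMaxMonotone T) {F : X × Dd X → EReal}
    (hF : IsRepr T F) (ys : Dd X) (y : X) :
    ((ys y : ℝ) : EReal) ≤ conj2 F (ys, y) := by
  by_contra hlt; push_neg at hlt
  have hmem : ys ∈ T y := by
    refine hT.2 y ys fun a as has => ?_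
    have hterm : ((ys a + as y - as a : ℝ) : EReal) ≤ conj2 F (ys, y) := by
      have h1 := conj2_term_le F (ys, y) (a, as)
      rw [hF.2.2.2 (a, as) has, ← EReal.coe_sub] at h1
      exact h1
    have hr : (ys a + as y - as a : ℝ) < ys y := by
      have := lt_of_le_of_lt hterm hlt; exact_mod_cast this
    have hexp : (ys - as) (y - a) = ys y - ys a - as y + as a := by
      simp only [ContinuousLinearMap.sub_apply, map_sub]; ring
    rw [hexp]; linarith
  have h2 := conj2_term_le F (ys, y) (y, ys)
  rw [hF.2.2.2 (y, ys) hmem, ← EReal.coe_sub] at h2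
  rw [show (ys y + ys y - ys y : ℝ) = ys y by ring] at h2
  exact absurd (lt_of_le_of_lt h2 hlt) (lt_irrefl _)

set_option maxHeartbeats 1000000 in
lemma aux_fitz_le_repr {F : X × Dd X → EReal} (hconv : EConvexOn F)
    (hge : ∀ q : X × Dd X, ((q.2 q.1 : ℝ) : EReal) ≤ F q)
    {a : X} {as : Dd X} (heq : F (a, as) = ((as a : ℝ) : EReal)) (q : X × Dd X) :
    ((q.2 a + as q.1 - as a : ℝ) : EReal) ≤ F q := by
  by_cases hq : F q = ⊤
  · rw [hq]; exact le_top
  have hqb : F q ≠ ⊥ := by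
    intro h; have h2 := hge q; rw [h, le_bot_iff] at h2; exact EReal.coe_ne_bot _ h2
  obtain ⟨v, hv⟩ : ∃ v : ℝ, F q = (v : EReal) := ⟨(F q).toReal, (EReal.coe_toReal hq hqb).symm⟩
  set A : ℝ := q.2 q.1 with hA
  set B : ℝ := q.2 a with hB
  set C : ℝ := as q.1 with hC
  set D : ℝ := as a with hD
  have hK0 : A ≤ v := by
    have := hge q; rw [hv, EReal.coe_le_coe_iff] at this; exact this
  rw [hv, EReal.coe_le_coe_iff]
  by_contra hlt; push_neg at hlt
  set K : ℝ := v - A with hKdef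
  set δ : ℝ := B + C - D - v with hδdef
  have hKpos : 0 ≤ K := by rw [hKdef]; linarith
  have hδpos : 0 < δ := by rw [hδdef]; linarith
  have hden : 0 < K + δ := by linarith
  set t : ℝ := (K + δ / 2) / (K + δ) with htdef
  set μ : ℝ := 1 - t with hμdef
  have htpos : 0 ≤ t := by rw [htdef]; exact div_nonneg (by linarith) (by linarith)
  have hμval : μ * (K + δ) = δ / 2 := by
    rw [hμdef, htdef]; field_simp; ring
  have htval : t * (K + δ) = K + δ / 2 := by
    rw [htdef]; field_simp
  have hμpos : 0 < μ := by nlinarith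
  have hsum : μ + t = 1 := by rw [hμdef]; ring
  have hcv := hconv q (a, as) μ t (le_of_lt hμpos) htpos hsum
  have hcomb2 : (μ • q + t • ((a, as) : X × Dd X)).2 = μ • q.2 + t • as := rfl
  have hcomb1 : (μ • q + t • ((a, as) : X × Dd X)).1 = μ • q.1 + t • a := rfl
  have hcoup : ((μ • q + t • ((a, as) : X × Dd X)).2 ((μ • q + t • ((a, as) : X × Dd X)).1) : ℝ)
      = μ * (μ * A + t * B) + t * (μ * C + t * D) := by
    rw [hcomb1, hcomb2]
    simp only [ContinuousLinearMap.add_apply, ContinuousLinearMap.coe_smul', Pi.smul_apply,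
      smul_eq_mul, map_add, map_smul]
    ring
  have hlhs := le_trans (hge _) hcv
  rw [hcoup, hv, heq] at hlhs
  have hrhs : (μ : EReal) * (v : EReal) + (t : EReal) * ((as a : ℝ) : EReal)
      = ((μ * v + t * D : ℝ) : EReal) := by
    rw [← EReal.coe_mul, ← EReal.coe_mul, ← EReal.coe_add, hD]
  rw [hrhs] at hlhs
  have hreal : μ * (μ * A + t * B) + t * (μ * C + t * D) ≤ μ * v + t * D := by
    exact_mod_cast hlhs
  -- divide by μ > 0 : μ*A + t*(B+C) - t*D ≤ v
  have hid : μ * (μ * A + t * B) + t * (μ * C + t * D)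
      = μ * (μ * A + t * (B + C) - t * D) + t * D := by
    linear_combination (t * D) * hsum
  rw [hid] at hreal
  have h6 : μ * A + t * (B + C) - t * D ≤ v :=
    le_of_mul_le_mul_left (by linarith) hμpos
  have hsub : t * (B + C) - t * D = t * v + t * δ := by
    linear_combination (-t) * hδdef
  have h6' : μ * A + (t * v + t * δ) ≤ v := by linarith
  have hμK : μ * K = μ * v - μ * A := by rw [hKdef]; ring
  have hvsplit : μ * v + t * v = v := by linear_combination v * hsum
  have h7 : t * δ ≤ μ * K := by linarith [h6', hμK, hvsplit]
  have e1 : t * δ * (K + δ) = (K + δ / 2) * δ := by linear_combination δ * htval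
  have e2 : μ * K * (K + δ) = (δ / 2) * K := by linear_combination K * hμval
  have h8 := mul_le_mul_of_nonneg_right h7 (le_of_lt hden)
  rw [e1, e2] at h8
  nlinarith [mul_nonneg hKpos hδpos.le, mul_pos hδpos hδpos]

lemma aux_conj2_eq_imp_mem {T : X → Set (Dd X)} (hT : IsMaxMonotone T) {F : X × Dd X → EReal}
    (hF : IsRepr T F) {ys : Dd X} {y : X} (hle : conj2 F (ys, y) ≤ ((ys y : ℝ) : EReal)) :
    ys ∈ T y := by
  refine hT.2 y ys fun a as has => ?_
  have hgy : conj2 F (ys, y) = ((ys y : ℝ) : EReal) :=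
    le_antisymm hle (aux_conj2_ge hT hF ys y)
  have hga_le : conj2 F (as, a) ≤ ((as a : ℝ) : EReal) := by
    refine iSup_le fun q => ?_
    have hb := aux_fitz_le_repr hF.1 hF.2.2.1 (hF.2.2.2 (a, as) has) q
    calc ((as q.1 + q.2 a : ℝ) : EReal) - F q
        ≤ ((as q.1 + q.2 a : ℝ) : EReal) - ((q.2 a + as q.1 - as a : ℝ) : EReal) := by
          rw [sub_eq_add_neg, sub_eq_add_neg]
          exact add_le_add_right (EReal.neg_le_neg_iff.2 hb) _
      _ = ((as a : ℝ) : EReal) := by rw [← EReal.coe_sub]; norm_cast; ring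
  have hga : conj2 F (as, a) = ((as a : ℝ) : EReal) :=
    le_antisymm hga_le (aux_conj2_ge hT hF as a)
  have h2 := econvex_conj2 F (ys, y) (as, a) (1/2) (1/2) (by norm_num) (by norm_num) (by norm_num)
  rw [hgy, hga] at h2
  set m : Dd X × X := (1/2 : ℝ) • ((ys, y) : Dd X × X) + (1/2 : ℝ) • ((as, a) : Dd X × X) with hm
  have hlow : ((m.1 m.2 : ℝ) : EReal) ≤ conj2 F m := by
    have := aux_conj2_ge hT hF m.1 m.2
    rwa [Prod.mk.eta] at this
  have hrhs : ((1 / 2 : ℝ) : EReal) * ((ys y : ℝ) : EReal)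
      + ((1 / 2 : ℝ) : EReal) * ((as a : ℝ) : EReal)
      = ((1 / 2 * (ys y) + 1 / 2 * (as a) : ℝ) : EReal) := by
    rw [← EReal.coe_mul, ← EReal.coe_mul, ← EReal.coe_add]
  rw [hrhs] at h2
  have hchain := le_trans hlow h2
  rw [EReal.coe_le_coe_iff] at hchain
  have hval : (m.1 m.2 : ℝ) = 1/2 * (1/2 * ys y + 1/2 * ys a) + 1/2 * (1/2 * as y + 1/2 * as a) := by
    have h1 : m.1 = (1/2 : ℝ) • ys + (1/2 : ℝ) • as := rfl
    have h2' : m.2 = (1/2 : ℝ) • y + (1/2 : ℝ) • a := rfl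
    rw [h1, h2']
    simp only [ContinuousLinearMap.add_apply, ContinuousLinearMap.coe_smul', Pi.smul_apply,
      smul_eq_mul, map_add, map_smul]
    ring
  rw [hval] at hchain
  have hexp : (ys - as) (y - a) = ys y - ys a - as y + as a := by
    simp only [ContinuousLinearMap.sub_apply, map_sub]; ring
  rw [hexp]; linarith
-- ==== conj2 of hatF and of shifts ====

lemma aux_conj2_hatF (F : X × Dd X → EReal) (a : Dd X) (b : X) :
    conj2 (hatF F) (a, b) = conj2 F (a, -b) := by
  refine le_antisymm (iSup_le fun q => ?_) (iSup_le fun q => ?_)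
  · have h1 : ((a, b) : Dd X × X).1 q.1 + q.2 ((a, b) : Dd X × X).2
        = ((a, -b) : Dd X × X).1 q.1 + (-q.2) (((a, -b) : Dd X × X).2) := by
      simp
    have h2 : hatF F q = F (q.1, -q.2) := rfl
    rw [h2, h1]
    exact le_iSup (fun q' : X × Dd X =>
      ((((a, -b) : Dd X × X).1 q'.1 + q'.2 (((a, -b) : Dd X × X).2) : ℝ) : EReal) - F q') (q.1, -q.2)
  · have h1 : ((a, -b) : Dd X × X).1 q.1 + q.2 (((a, -b) : Dd X × X).2)
        = ((a, b) : Dd X × X).1 q.1 + (-q.2) (((a, b) : Dd X × X).2) := by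
      simp
    have h2 : F q = hatF F (q.1, -q.2) := by
      show F q = F (q.1, - - q.2)
      rw [neg_neg]
    rw [h2, h1]
    exact le_iSup (fun q' : X × Dd X =>
      ((((a, b) : Dd X × X).1 q'.1 + q'.2 (((a, b) : Dd X × X).2) : ℝ) : EReal) - hatF F q')
      (q.1, -q.2)

lemma aux_iSup_add_coe_le {ι : Type*} (f : ι → EReal) (k : ℝ) (S : EReal)
    (h : ∀ i, f i + (k : EReal) ≤ S) : (⨆ i, f i) + (k : EReal) ≤ S := by
  rcases eq_or_ne (⨆ i, f i) ⊥ with hbot | hne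
  · rw [hbot, EReal.bot_add]; exact bot_le
  refine aux_le_of_forall_lt fun c hc => ?_
  have h1 : ((c - k : ℝ) : EReal) < ⨆ i, f i := by
    by_contra h'; push_neg at h'
    have h2 := add_le_add_left h' (k : EReal)
    rw [← EReal.coe_add] at h2
    rw [show (c - k + k : ℝ) = c by ring] at h2
    exact absurd hc (not_lt.2 h2)
  obtain ⟨i, hi⟩ := lt_iSup_iff.mp h1
  calc (c : EReal) = ((c - k : ℝ) : EReal) + (k : EReal) := by
        rw [← EReal.coe_add]; norm_cast; ring
    _ ≤ f i + (k : EReal) := add_le_add_left hi.le _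
    _ ≤ S := h i

lemma aux_conj2_shift (G : X × Dd X → EReal) (c : X × Dd X) (u : Dd X × X) :
    conj2 (fun q => G (q - c)) u = conj2 G u + ((u.1 c.1 + c.2 u.2 : ℝ) : EReal) := by
  refine le_antisymm (iSup_le fun q => ?_) ?_
  · have h1 : (u.1 q.1 + q.2 u.2 : ℝ) = (u.1 (q - c).1 + (q - c).2 u.2) + (u.1 c.1 + c.2 u.2) := by
      simp only [Prod.fst_sub, Prod.snd_sub, map_sub, ContinuousLinearMap.sub_apply]
      ring
    calc ((u.1 q.1 + q.2 u.2 : ℝ) : EReal) - G (q - c)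
        = (((u.1 (q - c).1 + (q - c).2 u.2 : ℝ) : EReal) - G (q - c))
            + ((u.1 c.1 + c.2 u.2 : ℝ) : EReal) := by
          rw [h1, EReal.coe_add, sub_eq_add_neg, sub_eq_add_neg, add_right_comm]
          simp only [sub_eq_add_neg, EReal.coe_add]
      _ ≤ conj2 G u + ((u.1 c.1 + c.2 u.2 : ℝ) : EReal) :=
          add_le_add_left (conj2_term_le G u (q - c)) _
  · refine aux_iSup_add_coe_le _ _ _ fun q => ?_
    have h1 : (u.1 q.1 + q.2 u.2 : ℝ) + (u.1 c.1 + c.2 u.2)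
        = u.1 (q + c).1 + (q + c).2 u.2 := by
      simp only [Prod.fst_add, Prod.snd_add, map_add, ContinuousLinearMap.add_apply]
      ring
    calc (((u.1 q.1 + q.2 u.2 : ℝ) : EReal) - G q) + ((u.1 c.1 + c.2 u.2 : ℝ) : EReal)
        = ((u.1 (q + c).1 + (q + c).2 u.2 : ℝ) : EReal) - G ((q + c) - c) := by
          rw [add_sub_cancel_right, ← h1, EReal.coe_add, sub_eq_add_neg, sub_eq_add_neg,
            add_right_comm]
          simp only [sub_eq_add_neg, EReal.coe_add]
      _ ≤ ⨆ q', ((u.1 q'.1 + q'.2 u.2 : ℝ) : EReal) - G (q' - c) :=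
          le_iSup (fun q' : X × Dd X => ((u.1 q'.1 + q'.2 u.2 : ℝ) : EReal) - G (q' - c)) (q + c)

lemma aux_add_coe_eq {x : EReal} {c d : ℝ} (h : x + (c : EReal) = (d : EReal)) :
    x = ((d - c : ℝ) : EReal) := by
  have hxt : x ≠ ⊤ := by
    rintro rfl
    rw [EReal.top_add_of_ne_bot (EReal.coe_ne_bot c)] at h
    exact EReal.coe_ne_top d h.symm
  have hxb : x ≠ ⊥ := by
    rintro rfl
    rw [EReal.bot_add] at h
    exact EReal.coe_ne_bot d h.symm
  lift x to ℝ using ⟨hxt, hxb⟩ with v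
  rw [← EReal.coe_add] at h
  norm_cast at h ⊢
  linarith

-- ==== convexity of the strict epigraph of an infimal convolution ====

lemma aux_infConv_strict_epi {Y : Type*} [AddCommGroup Y] [Module ℝ Y]
    {g k : Y → EReal} (hgc : EConvexOn g) (hkc : EConvexOn k)
    (hgbot : ∀ u, g u ≠ ⊥) (hkbot : ∀ u, k u ≠ ⊥) :
    Convex ℝ {yt : Y × ℝ | infConv g k yt.1 < (yt.2 : EReal)} := by
  rintro ⟨y1, t1⟩ h1 ⟨y2, t2⟩ h2 a b ha hb hab
  simp only [Set.mem_setOf_eq] at h1 h2 ⊢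
  obtain ⟨v1, hv1⟩ := iInf_lt_iff.mp h1
  obtain ⟨v2, hv2⟩ := iInf_lt_iff.mp h2
  show infConv g k (a • y1 + b • y2) < ((a * t1 + b * t2 : ℝ) : EReal)
  have hle : infConv g k (a • y1 + b • y2)
      ≤ g ((a • y1 + b • y2) - (a • v1 + b • v2)) + k (a • v1 + b • v2) :=
    iInf_le _ _
  have harg : (a • y1 + b • y2) - (a • v1 + b • v2) = a • (y1 - v1) + b • (y2 - v2) := by
    module
  rw [harg] at hle
  -- all four values are real
  have hG1t : g (y1 - v1) ≠ ⊤ := by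
    intro htop
    rw [htop, EReal.top_add_of_ne_bot (hkbot v1)] at hv1
    exact absurd hv1 (by simp)
  have hK1t : k v1 ≠ ⊤ := by
    intro htop
    rw [htop, EReal.add_top_of_ne_bot (hgbot (y1 - v1))] at hv1
    exact absurd hv1 (by simp)
  have hG2t : g (y2 - v2) ≠ ⊤ := by
    intro htop
    rw [htop, EReal.top_add_of_ne_bot (hkbot v2)] at hv2
    exact absurd hv2 (by simp)
  have hK2t : k v2 ≠ ⊤ := by
    intro htop
    rw [htop, EReal.add_top_of_ne_bot (hgbot (y2 - v2))] at hv2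
    exact absurd hv2 (by simp)
  obtain ⟨g1, hg1⟩ : ∃ w : ℝ, g (y1 - v1) = (w : EReal) :=
    ⟨_, (EReal.coe_toReal hG1t (hgbot _)).symm⟩
  obtain ⟨g2, hg2⟩ : ∃ w : ℝ, g (y2 - v2) = (w : EReal) :=
    ⟨_, (EReal.coe_toReal hG2t (hgbot _)).symm⟩
  obtain ⟨k1, hk1⟩ : ∃ w : ℝ, k v1 = (w : EReal) := ⟨_, (EReal.coe_toReal hK1t (hkbot _)).symm⟩
  obtain ⟨k2, hk2⟩ : ∃ w : ℝ, k v2 = (w : EReal) := ⟨_, (EReal.coe_toReal hK2t (hkbot _)).symm⟩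
  rw [hg1, hk1, ← EReal.coe_add, EReal.coe_lt_coe_iff] at hv1
  rw [hg2, hk2, ← EReal.coe_add, EReal.coe_lt_coe_iff] at hv2
  have hgc' := hgc (y1 - v1) (y2 - v2) a b ha hb hab
  have hkc' := hkc v1 v2 a b ha hb hab
  rw [hg1, hg2] at hgc'
  rw [hk1, hk2] at hkc'
  have hkey : (a * g1 + b * g2) + (a * k1 + b * k2) < a * t1 + b * t2 := by
    rcases ha.eq_or_lt with rfl | ha'
    · have hb1 : b = 1 := by linarith
      rw [hb1]; simp only [zero_mul, one_mul, zero_add]; linarith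
    · rcases hb.eq_or_lt with rfl | hb'
      · have ha1 : a = 1 := by linarith
        rw [ha1]; simp only [zero_mul, one_mul, add_zero]; linarith
      · nlinarith
  calc infConv g k (a • y1 + b • y2)
      ≤ g (a • (y1 - v1) + b • (y2 - v2)) + k (a • v1 + b • v2) := hle
    _ ≤ ((a * g1 + b * g2 : ℝ) : EReal) + ((a * k1 + b * k2 : ℝ) : EReal) := by
        refine add_le_add (le_trans hgc' ?_) (le_trans hkc' ?_) <;>
          rw [← EReal.coe_mul, ← EReal.coe_mul, ← EReal.coe_add]
    _ = (((a * g1 + b * g2) + (a * k1 + b * k2) : ℝ) : EReal) := by rw [← EReal.coe_add]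
    _ < ((a * t1 + b * t2 : ℝ) : EReal) := by exact_mod_cast hkey
set_option maxHeartbeats 1000000 in
/-- sufficient condition (iii) ⇒ (i) of Theorem 3. -/
theorem range_translate_of_infConv_lsc_exact [CompleteSpace X] (hX : Reflexive' X)
    (S T : X → Set (Dd X)) (hS : IsMaxMonotone S) (hT : IsMaxMonotone T)
    (p : X) (ps : Dd X)
    (FS FT : X × Dd X → EReal) (hFS : IsRepr S FS) (hFT : IsRepr T FT)
    (hdom : ∃ q : X × Dd X, q ∈ edom FS ∧ q - (p, ps) ∈ edom (hatF FT))
    (hlsc : LowerSemicontinuousAt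
      (infConv (conj2 FS)
        (fun u : Dd X × X => conj2 (hatF FT) u + ((ps u.2 + u.1 p : ℝ) : EReal))) (ps, p))
    (hex : ExactAt (conj2 FS)
      (fun u : Dd X × X => conj2 (hatF FT) u + ((ps u.2 + u.1 p : ℝ) : EReal)) (ps, p)) :
    ∃ x : X, ∃ s ∈ S (p + x), ∃ t ∈ T x, s + t = ps := by
  obtain ⟨q₀, hq₀S, hq₀T⟩ := hdom
  set g : Dd X × X → EReal := conj2 FS with hgdef
  set k : Dd X × X → EReal :=
    fun u : Dd X × X => conj2 (hatF FT) u + ((ps u.2 + u.1 p : ℝ) : EReal) with hkdef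
  set h : Dd X × X → EReal := infConv g k with hhdef
  set Ψ : X × Dd X → EReal := fun q => hatF FT (q - (p, ps)) with hΨdef
  -- basic bounds
  have hFSbot : ∀ q, FS q ≠ ⊥ := by
    intro q hq
    have h0 := hFS.2.2.1 q; rw [hq, le_bot_iff] at h0; exact EReal.coe_ne_bot _ h0
  have hΨlow : ∀ q : X × Dd X, ((-((q.2 - ps) (q.1 - p)) : ℝ) : EReal) ≤ Ψ q := by
    intro q
    have h0 := hFT.2.2.1 ((q - ((p, ps) : X × Dd X)).1, -((q - ((p, ps) : X × Dd X)).2))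
    have e1 : ((((q - ((p, ps) : X × Dd X)).1, -((q - ((p, ps) : X × Dd X)).2)) :
        X × Dd X).2 (((q - ((p, ps) : X × Dd X)).1, -((q - ((p, ps) : X × Dd X)).2)) :
        X × Dd X).1 : ℝ) = -((q.2 - ps) (q.1 - p)) := by
      simp
    rw [e1] at h0
    exact h0
  have hΨbot : ∀ q, Ψ q ≠ ⊥ := by
    intro q hq
    have h0 := hΨlow q; rw [hq, le_bot_iff] at h0; exact EReal.coe_ne_bot _ h0
  have hΨq₀ : Ψ q₀ ≠ ⊤ := hq₀T
  obtain ⟨vS, hvS⟩ : ∃ v : ℝ, FS q₀ = (v : EReal) :=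
    ⟨_, (EReal.coe_toReal hq₀S (hFSbot q₀)).symm⟩
  obtain ⟨vΨ, hvΨ⟩ : ∃ v : ℝ, Ψ q₀ = (v : EReal) :=
    ⟨_, (EReal.coe_toReal hΨq₀ (hΨbot q₀)).symm⟩
  -- k is the conjugate of the shifted hatF FT
  have k_eq : ∀ u, k u = conj2 Ψ u := by
    intro u
    have h0 := aux_conj2_shift (hatF FT) (p, ps) u
    rw [← hΨdef] at h0
    calc k u = conj2 (hatF FT) u + ((ps u.2 + u.1 p : ℝ) : EReal) := rfl
      _ = conj2 (hatF FT) u + ((u.1 p + ps u.2 : ℝ) : EReal) := by rw [add_comm (ps u.2)]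
      _ = conj2 Ψ u := h0.symm
  have hglow : ∀ u : Dd X × X, ((u.1 q₀.1 + q₀.2 u.2 - vS : ℝ) : EReal) ≤ g u := by
    intro u
    have h0 := conj2_term_le FS u q₀
    rw [hvS, ← EReal.coe_sub] at h0; exact h0
  have hklow : ∀ u : Dd X × X, ((u.1 q₀.1 + q₀.2 u.2 - vΨ : ℝ) : EReal) ≤ k u := by
    intro u
    rw [k_eq u]
    have h0 := conj2_term_le Ψ u q₀
    rw [hvΨ, ← EReal.coe_sub] at h0; exact h0
  have hgbot : ∀ u, g u ≠ ⊥ := by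
    intro u hu
    have h0 := hglow u; rw [hu, le_bot_iff] at h0; exact EReal.coe_ne_bot _ h0
  have hkbot : ∀ u, k u ≠ ⊥ := by
    intro u hu
    have h0 := hklow u; rw [hu, le_bot_iff] at h0; exact EReal.coe_ne_bot _ h0
  have hkconv : EConvexOn k := by
    have he : k = conj2 Ψ := funext k_eq
    rw [he]; exact econvex_conj2 Ψ
  have hstrict : Convex ℝ {yt : (Dd X × X) × ℝ | h yt.1 < (yt.2 : EReal)} := by
    rw [hhdef]
    exact aux_infConv_strict_epi (econvex_conj2 FS) hkconv hgbot hkbot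
  have hminh : ∀ u, ((pairA q₀ u + (-vS - vΨ) : ℝ) : EReal) ≤ h u := by
    intro u
    show _ ≤ ⨅ v, g (u - v) + k v
    refine le_iInf fun v => ?_
    have e : (pairA q₀ u + (-vS - vΨ) : ℝ)
        = ((u - v).1 q₀.1 + q₀.2 ((u - v).2) - vS) + (v.1 q₀.1 + q₀.2 v.2 - vΨ) := by
      simp only [pairA_apply, Prod.fst_sub, Prod.snd_sub, ContinuousLinearMap.sub_apply, map_sub]
      ring
    rw [e, EReal.coe_add]
    exact add_le_add (hglow (u - v)) (hklow v)
  -- Ψ is convex and lsc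
  have hΨconv : EConvexOn Ψ := by
    intro q1 q2 a b ha hb hab
    have h1 : a • (q1 - ((p, ps) : X × Dd X)) + b • (q2 - ((p, ps) : X × Dd X))
        = a • q1 + b • q2 - (a + b) • ((p, ps) : X × Dd X) := by module
    have harg : (a • q1 + b • q2) - ((p, ps) : X × Dd X)
        = a • (q1 - ((p, ps) : X × Dd X)) + b • (q2 - ((p, ps) : X × Dd X)) := by
      rw [h1, hab, one_smul]
    show hatF FT ((a • q1 + b • q2) - ((p, ps) : X × Dd X)) ≤ _
    rw [harg]
    set u1 : X × Dd X := q1 - ((p, ps) : X × Dd X) with hu1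
    set u2 : X × Dd X := q2 - ((p, ps) : X × Dd X) with hu2
    have h2 : hatF FT (a • u1 + b • u2) = FT (a • ((u1.1, -u1.2) : X × Dd X)
        + b • ((u2.1, -u2.2) : X × Dd X)) := by
      show FT ((a • u1 + b • u2).1, -((a • u1 + b • u2).2)) = _
      congr 1
      refine Prod.ext rfl ?_
      show -((a • u1 + b • u2).2) = (a • ((u1.1, -u1.2) : X × Dd X)
          + b • ((u2.1, -u2.2) : X × Dd X)).2
      simp only [Prod.snd_add, Prod.smul_snd, smul_neg, neg_add]
    rw [h2]
    exact hFT.1 (u1.1, -u1.2) (u2.1, -u2.2) a b ha hb hab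
  have hcont : Continuous (fun q : X × Dd X =>
      (((q - ((p, ps) : X × Dd X)).1, -((q - ((p, ps) : X × Dd X)).2)) : X × Dd X)) := by
    fun_prop
  have hΨlsc : LowerSemicontinuous Ψ := by
    intro q y hy
    have h0 := hFT.2.1 (((q - ((p, ps) : X × Dd X)).1, -((q - ((p, ps) : X × Dd X)).2))) y hy
    exact (hcont.tendsto q).eventually h0
  -- minorants of FS and Ψ in pairB form
  obtain ⟨φS, rS, hφS⟩ := aux_exists_minorant hFS.1 hFS.2.1 hFSbot hq₀S
  obtain ⟨zS, hzS⟩ := pairB_surj hX φS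
  have hminS : ∀ q, ((pairB zS q + rS : ℝ) : EReal) ≤ FS q := by
    intro q; rw [hzS]; exact hφS q
  obtain ⟨φΨ, rΨ, hφΨ⟩ := aux_exists_minorant hΨconv hΨlsc hΨbot hΨq₀
  obtain ⟨zΨ, hzΨ⟩ := pairB_surj hX φΨ
  have hminΨ : ∀ q, ((pairB zΨ q + rΨ : ℝ) : EReal) ≤ Ψ q := by
    intro q; rw [hzΨ]; exact hφΨ q
  -- the value of the dual problem
  set M : EReal := ⨆ q : X × Dd X, (((ps q.1 + q.2 p : ℝ) : EReal) - FS q - Ψ q) with hMdef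
  have hM : h (ps, p) ≤ M := by
    refine aux_le_of_forall_lt fun c hc => ?_
    obtain ⟨z, r, hzmin, hzval⟩ := aux_FM pairA (pairA_surj hX) hstrict hlsc hminh hc
    have key : ∀ c₁ c₂ : ℝ, (c₁ : EReal) < FS z → (c₂ : EReal) < Ψ z → c₁ + c₂ ≤ -r := by
      intro c₁ c₂ h1 h2
      obtain ⟨z₁, r₁, hz₁min, hz₁val⟩ := aux_FM pairB (pairB_surj hX)
        (aux_strict_epi_convex hFS.1) (hFS.2.1 z) hminS h1
      obtain ⟨z₂, r₂, hz₂min, hz₂val⟩ := aux_FM pairB (pairB_surj hX)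
        (aux_strict_epi_convex hΨconv) (hΨlsc z) hminΨ h2
      have hgz₁ : g z₁ ≤ ((-r₁ : ℝ) : EReal) := by
        rw [hgdef]
        exact iSup_le fun q => aux_coe_sub_le (hz₁min q)
      have hkz₂ : k z₂ ≤ ((-r₂ : ℝ) : EReal) := by
        rw [k_eq z₂]
        exact iSup_le fun q => aux_coe_sub_le (hz₂min q)
      have hinf : h (z₁ + z₂) ≤ g z₁ + k z₂ := by
        have h0 := iInf_le (fun v => g ((z₁ + z₂) - v) + k v) z₂
        rwa [add_sub_cancel_right] at h0
      have hch : ((pairA z (z₁ + z₂) + r : ℝ) : EReal) ≤ ((-r₁ + -r₂ : ℝ) : EReal) := by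
        refine le_trans (hzmin (z₁ + z₂)) (le_trans hinf ?_)
        rw [EReal.coe_add]; exact add_le_add hgz₁ hkz₂
      rw [EReal.coe_le_coe_iff] at hch
      have hsplit : pairA z (z₁ + z₂) = pairA z z₁ + pairA z z₂ := map_add _ _ _
      have hv1 : pairB z₁ z = pairA z z₁ := rfl
      have hv2 : pairB z₂ z = pairA z z₂ := rfl
      rw [hsplit] at hch
      rw [hv1] at hz₁val
      rw [hv2] at hz₂val
      linarith
    have hlow1 : ((z.2 z.1 : ℝ) : EReal) ≤ FS z := hFS.2.2.1 z
    have hlow2 := hΨlow z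
    have hFSzt : FS z ≠ ⊤ := by
      intro htop
      set w : ℝ := -((z.2 - ps) (z.1 - p)) with hwdef
      have h2 : ((w - 1 : ℝ) : EReal) < Ψ z :=
        lt_of_lt_of_le (by exact_mod_cast sub_one_lt w) hlow2
      have h1 : ((-r - (w - 1) + 1 : ℝ) : EReal) < FS z := by
        rw [htop]; exact EReal.coe_lt_top _
      have h3 := key _ _ h1 h2
      linarith
    have hΨzt : Ψ z ≠ ⊤ := by
      intro htop
      have h1 : ((z.2 z.1 - 1 : ℝ) : EReal) < FS z :=
        lt_of_lt_of_le (by exact_mod_cast sub_one_lt _) hlow1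
      have h2 : ((-r - (z.2 z.1 - 1) + 1 : ℝ) : EReal) < Ψ z := by
        rw [htop]; exact EReal.coe_lt_top _
      have h3 := key _ _ h1 h2
      linarith
    obtain ⟨vSz, hvSz⟩ : ∃ v : ℝ, FS z = (v : EReal) :=
      ⟨_, (EReal.coe_toReal hFSzt (hFSbot z)).symm⟩
    obtain ⟨vΨz, hvΨz⟩ : ∃ v : ℝ, Ψ z = (v : EReal) :=
      ⟨_, (EReal.coe_toReal hΨzt (hΨbot z)).symm⟩
    have hbound : vSz + vΨz ≤ -r := by
      by_contra hcon; push_neg at hcon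
      have h1 : ((vSz - (vSz + vΨz + r) / 3 : ℝ) : EReal) < FS z := by
        rw [hvSz]; exact_mod_cast by linarith
      have h2 : ((vΨz - (vSz + vΨz + r) / 3 : ℝ) : EReal) < Ψ z := by
        rw [hvΨz]; exact_mod_cast by linarith
      have h3 := key _ _ h1 h2
      linarith
    have hMz := le_iSup (fun q : X × Dd X => ((ps q.1 + q.2 p : ℝ) : EReal) - FS q - Ψ q) z
    calc (c : EReal) ≤ ((pairA z (ps, p) + r : ℝ) : EReal) := by exact_mod_cast hzval
      _ ≤ ((ps z.1 + z.2 p - vSz - vΨz : ℝ) : EReal) := by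
          have e : pairA z (ps, p) = ps z.1 + z.2 p := rfl
          refine EReal.coe_le_coe_iff.mpr ?_
          rw [e]; linarith
      _ = ((ps z.1 + z.2 p : ℝ) : EReal) - FS z - Ψ z := by
          rw [hvSz, hvΨz, ← EReal.coe_sub, ← EReal.coe_sub]
      _ ≤ M := hMz
  have hMle : M ≤ ((ps p : ℝ) : EReal) := by
    rw [hMdef]
    refine iSup_le fun q => ?_
    by_cases h1 : FS q = ⊤
    · have e : ((ps q.1 + q.2 p : ℝ) : EReal) - FS q - Ψ q = ⊥ := by
        simp only [h1, sub_eq_add_neg, EReal.neg_top, EReal.add_bot, EReal.bot_add]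
      rw [e]; exact bot_le
    by_cases h2 : Ψ q = ⊤
    · have e : ((ps q.1 + q.2 p : ℝ) : EReal) - FS q - Ψ q = ⊥ := by
        simp only [h2, sub_eq_add_neg, EReal.neg_top, EReal.add_bot, EReal.bot_add]
      rw [e]; exact bot_le
    obtain ⟨v1, hv1⟩ : ∃ v : ℝ, FS q = (v : EReal) :=
      ⟨_, (EReal.coe_toReal h1 (hFSbot q)).symm⟩
    obtain ⟨v2, hv2⟩ : ∃ v : ℝ, Ψ q = (v : EReal) :=
      ⟨_, (EReal.coe_toReal h2 (hΨbot q)).symm⟩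
    have hb1 : (q.2 q.1 : ℝ) ≤ v1 := by
      have h0 := hFS.2.2.1 q; rw [hv1, EReal.coe_le_coe_iff] at h0; exact h0
    have hb2 : -((q.2 - ps) (q.1 - p)) ≤ v2 := by
      have h0 := hΨlow q; rw [hv2, EReal.coe_le_coe_iff] at h0; exact h0
    rw [hv1, hv2, ← EReal.coe_sub, ← EReal.coe_sub, EReal.coe_le_coe_iff]
    have hexp : ((q.2 - ps) (q.1 - p) : ℝ) = q.2 q.1 - q.2 p - ps q.1 + ps p := by
      simp only [ContinuousLinearMap.sub_apply, map_sub]; ring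
    rw [hexp] at hb2
    linarith
  obtain ⟨u, hu⟩ := hex
  have hfin : g ((ps, p) - u) + k u ≤ ((ps p : ℝ) : EReal) := by
    rw [← hu]; exact le_trans hM hMle
  have hga : (((ps - u.1) (p - u.2) : ℝ) : EReal) ≤ g ((ps, p) - u) := by
    rw [hgdef]; exact aux_conj2_ge hS hFS (ps - u.1) (p - u.2)
  have hhat : conj2 (hatF FT) u = conj2 FT (u.1, -u.2) := by
    have h0 := aux_conj2_hatF FT u.1 u.2
    rwa [Prod.mk.eta] at h0
  have hka : ((-(u.1 u.2) + (ps u.2 + u.1 p) : ℝ) : EReal) ≤ k u := by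
    show _ ≤ conj2 (hatF FT) u + ((ps u.2 + u.1 p : ℝ) : EReal)
    rw [hhat, EReal.coe_add]
    refine add_le_add ?_ le_rfl
    have h0 := aux_conj2_ge hT hFT u.1 (-u.2)
    rwa [map_neg] at h0
  have hsum_eq : (((ps - u.1) (p - u.2)) : ℝ) + (-(u.1 u.2) + (ps u.2 + u.1 p)) = ps p := by
    simp only [ContinuousLinearMap.sub_apply, map_sub]; ring
  have hfin' : g ((ps, p) - u) + k u
      ≤ (((((ps - u.1) (p - u.2)) : ℝ) + (-(u.1 u.2) + (ps u.2 + u.1 p)) : ℝ) : EReal) := by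
    rw [hsum_eq]; exact hfin
  obtain ⟨hEq1, hEq2⟩ := aux_squeeze hga hka hfin'
  have hmem1 : ps - u.1 ∈ S (p - u.2) := by
    refine aux_conj2_eq_imp_mem hS hFS ?_
    rw [hgdef] at hEq1
    exact le_of_eq hEq1
  have hc2 : conj2 FT (u.1, -u.2) ≤ ((u.1 (-u.2) : ℝ) : EReal) := by
    have h0 : conj2 (hatF FT) u + ((ps u.2 + u.1 p : ℝ) : EReal)
        = ((-(u.1 u.2) + (ps u.2 + u.1 p) : ℝ) : EReal) := hEq2
    rw [hhat] at h0
    have h1 := aux_add_coe_eq h0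
    rw [h1, map_neg]
    refine le_of_eq ?_
    norm_cast
    ring
  have hmem2 : u.1 ∈ T (-u.2) := aux_conj2_eq_imp_mem hT hFT hc2
  refine ⟨-u.2, ps - u.1, ?_, u.1, hmem2, ?_⟩
  · rw [show p + -u.2 = p - u.2 from (sub_eq_add_neg p u.2).symm]
    exact hmem1
  · abel
end
end

section
/- Let X be a reflexive Banach space, S, T : X ⇉ X* maximal monotone, p ∈ X, p* ∈ X*. If p* ∈ R(S(p + ·) + T(·)), then for all representative functions f_S ∈ F_S and f_T ∈ F_T one has dom f_S ∩ (dom f̂_T + (p, p*)) ≠ ∅ and the function f_S* □ (f̂_T* + ⟨(p*, p), (·, ·)⟩) is lower semicontinuous at (p*, p) and exact at (p*, p), with value ⟨p*, p⟩ there. -/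
noncomputable section

open scoped Topology Pointwise

variable {X : Type*} [NormedAddCommGroup X] [NormedSpace ℝ X]

section AuxLemmas

variable {X : Type*} [NormedAddCommGroup X] [NormedSpace ℝ X]

lemma coe_sub_le' {d c : ℝ} {A : EReal} (h : (c : EReal) ≤ A) :
    ((d : ℝ) : EReal) - A ≤ ((d - c : ℝ) : EReal) := by
  induction A using EReal.rec with
  | bot => exact absurd (le_bot_iff.1 h) (EReal.coe_ne_bot c)
  | coe r =>
      rw [← EReal.coe_sub]
      exact EReal.coe_le_coe_iff.2 (by have := EReal.coe_le_coe_iff.1 h; linarith)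
  | top => rw [EReal.sub_top]; exact bot_le

lemma coe_sub_add' (x c : ℝ) (G : EReal) :
    ((x : ℝ) : EReal) - G + ((c : ℝ) : EReal) = ((x + c : ℝ) : EReal) - G := by
  induction G using EReal.rec with
  | bot => rw [EReal.coe_sub_bot, EReal.coe_sub_bot, EReal.top_add_of_ne_bot (EReal.coe_ne_bot c)]
  | coe r => exact_mod_cast congrArg Real.toEReal (by ring : x - r + c = x + c - r)
  | top => rw [EReal.sub_top, EReal.sub_top, EReal.bot_add]

lemma key_add' {A B g h : EReal} {d1 d2 : ℝ} (hg : g ≠ ⊥) (hh : h ≠ ⊥)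
    (h1 : ((d1 : ℝ) : EReal) - A ≤ g) (h2 : ((d2 : ℝ) : EReal) - B ≤ h) :
    ((d1 + d2 : ℝ) : EReal) - (A + B) ≤ g + h := by
  rcases eq_or_ne A ⊥ with hA | hA
  · have hg' : g = ⊤ := top_le_iff.1 (by rw [hA, EReal.coe_sub_bot] at h1; exact h1)
    rw [hg', EReal.top_add_of_ne_bot hh]; exact le_top
  rcases eq_or_ne B ⊥ with hB | hB
  · have hh' : h = ⊤ := top_le_iff.1 (by rw [hB, EReal.coe_sub_bot] at h2; exact h2)
    rw [hh', EReal.add_top_of_ne_bot hg]; exact le_top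
  rcases eq_or_ne A ⊤ with hA2 | hA2
  · rw [hA2, EReal.top_add_of_ne_bot hB, EReal.sub_top]; exact bot_le
  rcases eq_or_ne B ⊤ with hB2 | hB2
  · rw [hB2, EReal.add_top_of_ne_bot hA, EReal.sub_top]; exact bot_le
  lift A to ℝ using ⟨hA2, hA⟩
  lift B to ℝ using ⟨hB2, hB⟩
  have e : ((d1 + d2 : ℝ) : EReal) - ((A : EReal) + (B : EReal))
      = ((d1 - A : ℝ) : EReal) + ((d2 - B : ℝ) : EReal) := by
    norm_cast; ring
  rw [e]
  exact add_le_add (by rwa [← EReal.coe_sub] at h1) (by rwa [← EReal.coe_sub] at h2)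

lemma pi_ne_bot' {F : X × Dd X → EReal}
    (hge : ∀ p : X × Dd X, ((p.2 p.1 : ℝ) : EReal) ≤ F p) (q : X × Dd X) : F q ≠ ⊥ := by
  intro h
  have := hge q
  rw [h, le_bot_iff] at this
  exact EReal.coe_ne_bot _ this

lemma conj2_ne_bot' {F : X × Dd X → EReal} {q0 : X × Dd X} {r : ℝ}
    (h0 : F q0 = (r : EReal)) (y : Dd X × X) : conj2 F y ≠ ⊥ := by
  have h1 : ((y.1 q0.1 + q0.2 y.2 : ℝ) : EReal) - F q0 ≤ conj2 F y :=
    le_iSup (fun q : X × Dd X => ((y.1 q.1 + q.2 y.2 : ℝ) : EReal) - F q) q0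
  rw [h0, ← EReal.coe_sub] at h1
  intro hb
  rw [hb, le_bot_iff] at h1
  exact EReal.coe_ne_bot _ h1

lemma reprA {T : X → Set (Dd X)} {F : X × Dd X → EReal} (hF : IsRepr T F)
    {a : X} {b : Dd X} (hb : b ∈ T a) (q : X × Dd X) :
    ((b q.1 + q.2 a - b a : ℝ) : EReal) ≤ F q := by
  obtain ⟨hconv, -, hge, heq⟩ := hF
  by_cases htop : F q = ⊤
  · rw [htop]; exact le_top
  have hbot : F q ≠ ⊥ := pi_ne_bot' hge q
  have hm : ((F q).toReal : EReal) = F q := EReal.coe_toReal htop hbot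
  set m := (F q).toReal
  have hba : F (a, b) = ((b a : ℝ) : EReal) := heq (a, b) hb
  have key : ∀ l : ℝ, l ∈ Set.Ioo (0 : ℝ) 1 →
      b q.1 + q.2 a - b a ≤ m + l * (b q.1 + q.2 a - b a - q.2 q.1) := by
    intro l hl
    have h1 : (0 : ℝ) ≤ l := hl.1.le
    have h2 : (0 : ℝ) ≤ 1 - l := by linarith [hl.2]
    have hc := hconv q (a, b) l (1 - l) h1 h2 (by ring)
    rw [← hm, hba, ← EReal.coe_mul, ← EReal.coe_mul, ← EReal.coe_add] at hc
    have hz := hge (l • q + (1 - l) • (a, b))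
    have hz2 : ((l • q + (1 - l) • (a, b) : X × Dd X).2) ((l • q + (1 - l) • (a, b) : X × Dd X).1)
        = l * l * (q.2 q.1) + l * (1 - l) * (q.2 a) + (1 - l) * l * (b q.1)
          + (1 - l) * (1 - l) * (b a) := by
      simp [Prod.fst_add, Prod.snd_add, Prod.smul_fst, Prod.smul_snd,
        ContinuousLinearMap.add_apply, ContinuousLinearMap.smul_apply, map_add, map_smul,
        smul_eq_mul]
      ring
    rw [hz2] at hz
    have hreal := EReal.coe_le_coe_iff.1 (hz.trans hc)
    nlinarith [hreal, hl.1, mul_pos hl.1 hl.1]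
  have hC : Filter.Tendsto (fun l : ℝ => m + l * (b q.1 + q.2 a - b a - q.2 q.1))
      (nhdsWithin (0 : ℝ) (Set.Ioi 0)) (nhds m) := by
    have : Filter.Tendsto (fun l : ℝ => m + l * (b q.1 + q.2 a - b a - q.2 q.1))
        (nhds (0 : ℝ)) (nhds (m + 0 * (b q.1 + q.2 a - b a - q.2 q.1))) :=
      ((continuous_const.add (continuous_id.mul continuous_const)).tendsto 0)
    simpa using this.mono_left nhdsWithin_le_nhds
  have hfin : b q.1 + q.2 a - b a ≤ m := by
    refine ge_of_tendsto hC ?_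
    filter_upwards [Ioo_mem_nhdsGT_of_mem (Set.mem_Ico.2 ⟨le_refl (0 : ℝ), zero_lt_one⟩)]
      with l hl using key l hl
  rw [← hm]
  exact EReal.coe_le_coe_iff.2 hfin

lemma conj2_lsc (F : X × Dd X → EReal) : LowerSemicontinuous (conj2 F) := by
  have h : ∀ q : X × Dd X,
      LowerSemicontinuous (fun p : Dd X × X => ((p.1 q.1 + q.2 p.2 : ℝ) : EReal) - F q) := by
    intro q
    rcases eq_or_ne (F q) ⊤ with h1 | h1
    · simp only [h1, EReal.sub_top]
      exact lowerSemicontinuous_const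
    rcases eq_or_ne (F q) ⊥ with h2 | h2
    · simp only [h2, EReal.coe_sub_bot]
      exact lowerSemicontinuous_const
    have hm : ((F q).toReal : EReal) = F q := EReal.coe_toReal h1 h2
    have he : (fun p : Dd X × X => ((p.1 q.1 + q.2 p.2 : ℝ) : EReal) - F q)
        = fun p : Dd X × X => ((p.1 q.1 + q.2 p.2 - (F q).toReal : ℝ) : EReal) := by
      funext p
      rw [EReal.coe_sub, hm]
    rw [he]
    have hcont : Continuous fun p : Dd X × X => p.1 q.1 + q.2 p.2 - (F q).toReal := by
      have c1 : Continuous fun p : Dd X × X => p.1 q.1 :=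
        (ContinuousLinearMap.apply ℝ ℝ q.1).continuous.comp continuous_fst
      have c2 : Continuous fun p : Dd X × X => q.2 p.2 :=
        q.2.continuous.comp continuous_snd
      exact (c1.add c2).sub continuous_const
    exact (continuous_coe_real_ereal.comp hcont).lowerSemicontinuous
  exact lowerSemicontinuous_iSup h

end AuxLemmas

/-- necessity (i) ⇒ (ii) of Theorem 3, with the value `⟨p*, p⟩`. -/
theorem infConv_lsc_exact_of_range_translate [CompleteSpace X] (hX : Reflexive' X)
    (S T : X → Set (Dd X)) (hS : IsMaxMonotone S) (hT : IsMaxMonotone T)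
    (p : X) (ps : Dd X)
    (hrange : ∃ x : X, ∃ s ∈ S (p + x), ∃ t ∈ T x, s + t = ps) :
    ∀ FS FT : X × Dd X → EReal, IsRepr S FS → IsRepr T FT →
      (∃ q : X × Dd X, q ∈ edom FS ∧ q - (p, ps) ∈ edom (hatF FT)) ∧
      LowerSemicontinuousAt
        (infConv (conj2 FS)
          (fun u : Dd X × X => conj2 (hatF FT) u + ((ps u.2 + u.1 p : ℝ) : EReal))) (ps, p) ∧
      ExactAt (conj2 FS)
        (fun u : Dd X × X => conj2 (hatF FT) u + ((ps u.2 + u.1 p : ℝ) : EReal)) (ps, p) ∧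
      infConv (conj2 FS)
        (fun u : Dd X × X => conj2 (hatF FT) u + ((ps u.2 + u.1 p : ℝ) : EReal)) (ps, p)
        = ((ps p : ℝ) : EReal) := by
  obtain ⟨x₀, s, hs, t, ht, hst⟩ := hrange
  intro FS FT hFS hFT
  have hFSa : FS (p + x₀, s) = ((s (p + x₀) : ℝ) : EReal) := hFS.2.2.2 (p + x₀, s) hs
  have hFTt : FT (x₀, t) = ((t x₀ : ℝ) : EReal) := hFT.2.2.2 (x₀, t) ht
  have hneg : s - ps = -t := by rw [← hst]; abel
  have hsub1 : ((p + x₀, s) : X × Dd X) - (p, ps) = (x₀, -t) := by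
    rw [Prod.mk_sub_mk, add_sub_cancel_left, hneg]
  have hFhat : hatF FT (x₀, -t) = ((t x₀ : ℝ) : EReal) := by
    show FT (x₀, -(-t)) = _
    rw [neg_neg]; exact hFTt
  have hps : ∀ v : X, ps v = s v + t v := fun v => by
    rw [← hst, ContinuousLinearMap.add_apply]
  have hadd : ∀ (f : Dd X) (u v : X), f (u + v) = f u + f v := fun f u v => map_add f u v
  set G : X × Dd X → EReal := fun q => FS q + hatF FT (q - (p, ps)) with hGdef
  have hgbot : ∀ y : Dd X × X, conj2 FS y ≠ ⊥ := conj2_ne_bot' hFSa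
  have hcbot : ∀ u : Dd X × X, conj2 (hatF FT) u ≠ ⊥ := conj2_ne_bot' hFhat
  have hhbot : ∀ u : Dd X × X,
      conj2 (hatF FT) u + ((ps u.2 + u.1 p : ℝ) : EReal) ≠ ⊥ := fun u => by
    rw [Ne, EReal.add_eq_bot_iff]
    push_neg
    exact ⟨hcbot u, EReal.coe_ne_bot _⟩
  have hL_le : ∀ y : Dd X × X, conj2 G y ≤
      infConv (conj2 FS)
        (fun u : Dd X × X => conj2 (hatF FT) u + ((ps u.2 + u.1 p : ℝ) : EReal)) y := by
    intro y
    refine le_iInf fun u => ?_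
    refine iSup_le fun q => ?_
    have hg1 : (((y - u).1 q.1 + q.2 (y - u).2 : ℝ) : EReal) - FS q ≤ conj2 FS (y - u) :=
      le_iSup (fun r : X × Dd X => (((y - u).1 r.1 + r.2 (y - u).2 : ℝ) : EReal) - FS r) q
    have hh0 : ((u.1 (q - (p, ps)).1 + (q - (p, ps)).2 u.2 : ℝ) : EReal)
        - hatF FT (q - (p, ps)) ≤ conj2 (hatF FT) u :=
      le_iSup (fun r : X × Dd X => ((u.1 r.1 + r.2 u.2 : ℝ) : EReal) - hatF FT r) (q - (p, ps))
    have hh1 : ((u.1 q.1 + q.2 u.2 : ℝ) : EReal) - hatF FT (q - (p, ps))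
        ≤ conj2 (hatF FT) u + ((ps u.2 + u.1 p : ℝ) : EReal) := by
      have h3 := add_le_add_left hh0 (((ps u.2 + u.1 p : ℝ)) : EReal)
      rw [coe_sub_add'] at h3
      have e2 : u.1 (q - (p, ps)).1 + (q - (p, ps)).2 u.2 + (ps u.2 + u.1 p)
          = u.1 q.1 + q.2 u.2 := by
        simp only [Prod.fst_sub, Prod.snd_sub, map_sub, ContinuousLinearMap.sub_apply]
        ring
      rw [e2] at h3
      exact h3
    have hkey := key_add' (hgbot (y - u)) (hhbot u) hg1 hh1
    have e4 : (y - u).1 q.1 + q.2 (y - u).2 + (u.1 q.1 + q.2 u.2) = y.1 q.1 + q.2 y.2 := by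
      simp only [Prod.fst_sub, Prod.snd_sub, map_sub, ContinuousLinearMap.sub_apply]
      ring
    rw [e4] at hkey
    exact hkey
  have hL_pt : ((ps p : ℝ) : EReal) ≤ conj2 G (ps, p) := by
    have h1 : ((ps (p + x₀) + s p : ℝ) : EReal) - G (p + x₀, s) ≤ conj2 G (ps, p) :=
      le_iSup (fun q : X × Dd X => ((ps q.1 + q.2 p : ℝ) : EReal) - G q) (p + x₀, s)
    have e1 : G (p + x₀, s) = ((s (p + x₀) + t x₀ : ℝ) : EReal) := by
      show FS (p + x₀, s) + hatF FT ((p + x₀, s) - (p, ps)) = _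
      rw [hsub1, hFSa, hFhat, ← EReal.coe_add]
    rw [e1, ← EReal.coe_sub] at h1
    refine le_trans (le_of_eq ?_) h1
    norm_cast
    have h2 := hps p
    have h3 := hps x₀
    have h4 := hadd s p x₀
    have h5 := hadd ps p x₀
    linarith
  have hsub2 : ((ps, p) : Dd X × X) - (t, -x₀) = (s, p + x₀) := by
    rw [Prod.mk_sub_mk, sub_neg_eq_add, ← hst, add_sub_cancel_right]
  have gle : conj2 FS (s, p + x₀) ≤ ((s (p + x₀) : ℝ) : EReal) := by
    refine iSup_le fun q => ?_
    refine le_trans (coe_sub_le' (d := s q.1 + q.2 (p + x₀)) (reprA hFS hs q)) (le_of_eq ?_)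
    norm_cast
    ring
  have tle : conj2 (hatF FT) (t, -x₀) ≤ ((t x₀ : ℝ) : EReal) := by
    refine iSup_le fun q => ?_
    have e7 : t q.1 + q.2 (-x₀) = t q.1 + (-q.2) x₀ := by
      simp [ContinuousLinearMap.neg_apply]
    show ((t q.1 + q.2 (-x₀) : ℝ) : EReal) - FT (q.1, -q.2) ≤ _
    rw [e7]
    refine le_trans (coe_sub_le' (d := t q.1 + (-q.2) x₀) (reprA hFT ht (q.1, -q.2)))
      (le_of_eq ?_)
    norm_cast
    ring
  have hsum : conj2 FS (((ps, p) : Dd X × X) - (t, -x₀))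
      + (conj2 (hatF FT) (t, -x₀) + ((ps (-x₀) + t p : ℝ) : EReal))
      ≤ ((ps p : ℝ) : EReal) := by
    rw [hsub2]
    refine le_trans (add_le_add gle (add_le_add_left tle _)) (le_of_eq ?_)
    rw [← EReal.coe_add, ← EReal.coe_add]
    norm_cast
    have h2 := hps p
    have h3 := hps x₀
    have h4 := hadd s p x₀
    have h5 : ps (-x₀) = -(ps x₀) := map_neg ps x₀
    linarith
  have hinf_le : infConv (conj2 FS)
      (fun u : Dd X × X => conj2 (hatF FT) u + ((ps u.2 + u.1 p : ℝ) : EReal)) (ps, p)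
      ≤ conj2 FS (((ps, p) : Dd X × X) - (t, -x₀))
        + (conj2 (hatF FT) (t, -x₀) + ((ps (-x₀) + t p : ℝ) : EReal)) :=
    iInf_le (fun u : Dd X × X => conj2 FS ((ps, p) - u)
      + (conj2 (hatF FT) u + ((ps u.2 + u.1 p : ℝ) : EReal))) (t, -x₀)
  have hval : infConv (conj2 FS)
      (fun u : Dd X × X => conj2 (hatF FT) u + ((ps u.2 + u.1 p : ℝ) : EReal)) (ps, p)
      = ((ps p : ℝ) : EReal) :=
    le_antisymm (hinf_le.trans hsum) (hL_pt.trans (hL_le (ps, p)))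
  have hLpt_eq : conj2 G (ps, p) = ((ps p : ℝ) : EReal) :=
    le_antisymm ((hL_le (ps, p)).trans hval.le) hL_pt
  refine ⟨⟨(p + x₀, s), ?_, ?_⟩, ?_, ⟨(t, -x₀), ?_⟩, hval⟩
  · show FS (p + x₀, s) ≠ ⊤
    rw [hFSa]; exact EReal.coe_ne_top _
  · show hatF FT ((p + x₀, s) - (p, ps)) ≠ ⊤
    rw [hsub1, hFhat]; exact EReal.coe_ne_top _
  · intro y' hy'
    rw [hval] at hy'
    have hy2 : y' < conj2 G (ps, p) := by rw [hLpt_eq]; exact hy'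
    filter_upwards [conj2_lsc G (ps, p) y' hy2] with z hz using hz.trans_le (hL_le z)
  · rw [hval]
    exact le_antisymm (hval.symm.trans_le hinf_le) hsum
end
end

section
/- Let X be a reflexive Banach space and S, T : X ⇉ X* maximal monotone operators, p ∈ X, p* ∈ X*, f_S ∈ F_S, f_T ∈ F_T. If there exist ū ∈ X, ū* ∈ X* such that (f_S + f̂_T(· − p, · − p*))*(p*, p) = f_S*(p* − ū*, p − ū) + f̂_T*(ū*, ū) + ⟨p*, ū⟩ + ⟨ū*, p⟩, then f_S*(p* − ū*, p − ū) = ⟨p* − ū*, p − ū⟩ and f̂_T*(ū*, ū) = −⟨ū*, ū⟩, and consequently p* ∈ S(p − ū) + T(−ū). -/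
noncomputable section

open scoped Topology Pointwise

variable {X : Type*} [NormedAddCommGroup X] [NormedSpace ℝ X]

/-- Key lemma: for a representative function `F` of a maximal monotone `T`, the
conjugate dominates the duality product, with equality implying graph membership. -/
lemma repr_conj_key {T : X → Set (Dd X)} {F : X × Dd X → EReal}
    (hT : IsMaxMonotone T) (hF : IsRepr T F) (x : X) (xs : Dd X) :
    ((xs x : ℝ) : EReal) ≤ conj2 F (xs, x) ∧
      (conj2 F (xs, x) = ((xs x : ℝ) : EReal) → xs ∈ T x) := by
  by_cases hc : ∀ y ys, ys ∈ T y → 0 ≤ (xs - ys) (x - y)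
  · have hmem : xs ∈ T x := hT.2 x xs hc
    have hFx : F (x, xs) = ((xs x : ℝ) : EReal) := hF.2.2.2 (x, xs) hmem
    constructor
    · have : ((xs x + xs x : ℝ) : EReal) - F (x, xs) ≤ conj2 F (xs, x) :=
        le_iSup (fun q : X × Dd X => ((xs q.1 + q.2 x : ℝ) : EReal) - F q) (x, xs)
      rw [hFx, ← EReal.coe_sub] at this
      simpa using this
    · intro _; exact hmem
  · push_neg at hc
    obtain ⟨y, ys, hys, hlt⟩ := hc
    have hFy : F (y, ys) = ((ys y : ℝ) : EReal) := hF.2.2.2 (y, ys) hys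
    have hterm : ((xs y + ys x : ℝ) : EReal) - F (y, ys) ≤ conj2 F (xs, x) :=
      le_iSup (fun q : X × Dd X => ((xs q.1 + q.2 x : ℝ) : EReal) - F q) (y, ys)
    rw [hFy, ← EReal.coe_sub] at hterm
    have hreal : xs x < xs y + ys x - ys y := by
      have := hlt
      simp only [ContinuousLinearMap.sub_apply, map_sub] at this
      linarith
    have hlt' : ((xs x : ℝ) : EReal) < conj2 F (xs, x) :=
      lt_of_lt_of_le (EReal.coe_lt_coe_iff.2 hreal) hterm
    exact ⟨hlt'.le, fun heq => absurd heq.symm hlt'.ne⟩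

/-- Conjugate of `hatF`. -/
lemma conj2_hatF_eq (F : X × Dd X → EReal) (x : X) (xs : Dd X) :
    conj2 (hatF F) (xs, x) = conj2 F (xs, -x) := by
  unfold conj2 hatF
  apply le_antisymm
  · refine iSup_le fun q => le_iSup_of_le (q.1, -q.2) (le_of_eq ?_)
    simp
  · refine iSup_le fun q => le_iSup_of_le (q.1, -q.2) (le_of_eq ?_)
    simp

/-- if the conjugate of `f_S + f̂_T(· − p, · − p*)` at `(p*, p)` is attained
as indicated, then the two conjugate equalities hold and `p* ∈ S(p − ū) + T(−ū)`. -/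
theorem attained_min_gives_solution [CompleteSpace X] (hX : Reflexive' X)
    (S T : X → Set (Dd X)) (hS : IsMaxMonotone S) (hT : IsMaxMonotone T)
    (p : X) (ps : Dd X)
    (FS FT : X × Dd X → EReal) (hFS : IsRepr S FS) (hFT : IsRepr T FT)
    (ub : X) (ubs : Dd X)
    (h : conj2 (fun q : X × Dd X => FS q + hatF FT (q.1 - p, q.2 - ps)) (ps, p)
        = conj2 FS (ps - ubs, p - ub) + conj2 (hatF FT) (ubs, ub)
          + ((ps ub + ubs p : ℝ) : EReal)) :
    conj2 FS (ps - ubs, p - ub) = (((ps - ubs) (p - ub) : ℝ) : EReal) ∧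
    conj2 (hatF FT) (ubs, ub) = ((-(ubs ub) : ℝ) : EReal) ∧
    ∃ s ∈ S (p - ub), ∃ t ∈ T (-ub), s + t = ps := by
  classical
  set A := conj2 FS (ps - ubs, p - ub) with hA
  set B := conj2 (hatF FT) (ubs, ub) with hB
  set a : ℝ := (ps - ubs) (p - ub) with ha
  set b : ℝ := -(ubs ub) with hb
  set c : ℝ := ps ub + ubs p with hc
  -- lower bounds from the key lemma
  have keyS := repr_conj_key hS hFS (p - ub) (ps - ubs)
  have keyT := repr_conj_key hT hFT (-ub) ubs
  have hBeq : B = conj2 FT (ubs, -ub) := conj2_hatF_eq FT ub ubs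
  have hAa : ((a : ℝ) : EReal) ≤ A := keyS.1
  have hBb : ((b : ℝ) : EReal) ≤ B := by
    rw [hBeq]
    have := keyT.1
    simpa [hb, map_neg] using this
  -- upper bound on the left-hand side
  have hL : conj2 (fun q : X × Dd X => FS q + hatF FT (q.1 - p, q.2 - ps)) (ps, p)
      ≤ ((ps p : ℝ) : EReal) := by
    refine iSup_le fun q => ?_
    have h1 : ((q.2 q.1 : ℝ) : EReal) ≤ FS q := hFS.2.2.1 q
    have h2 : (((-(q.2 - ps)) (q.1 - p) : ℝ) : EReal) ≤ hatF FT (q.1 - p, q.2 - ps) :=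
      hFT.2.2.1 (q.1 - p, -(q.2 - ps))
    have hsum : ((q.2 q.1 + (-(q.2 - ps)) (q.1 - p) : ℝ) : EReal)
        ≤ FS q + hatF FT (q.1 - p, q.2 - ps) := by
      rw [EReal.coe_add]; exact add_le_add h1 h2
    calc ((ps q.1 + q.2 p : ℝ) : EReal) - (FS q + hatF FT (q.1 - p, q.2 - ps))
        ≤ ((ps q.1 + q.2 p : ℝ) : EReal)
            - ((q.2 q.1 + (-(q.2 - ps)) (q.1 - p) : ℝ) : EReal) :=
          EReal.sub_le_sub le_rfl hsum
      _ = ((ps q.1 + q.2 p - (q.2 q.1 + (-(q.2 - ps)) (q.1 - p)) : ℝ) : EReal) :=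
          (EReal.coe_sub _ _).symm
      _ ≤ ((ps p : ℝ) : EReal) := by
          apply EReal.coe_le_coe_iff.2
          simp only [ContinuousLinearMap.neg_apply, ContinuousLinearMap.sub_apply, map_sub]
          ring_nf
          linarith
  rw [h] at hL
  -- real identity: a + b + c = ps p
  have habc : a + b + c = ps p := by
    simp only [ha, hb, hc, ContinuousLinearMap.sub_apply, map_sub]
    ring
  -- deduce A = a and B = b
  have hAle : A ≤ ((a : ℝ) : EReal) := by
    by_contra hcon
    push_neg at hcon
    have h1 : ((a : ℝ) : EReal) + ((b : ℝ) : EReal) + ((c : ℝ) : EReal)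
        < A + B + ((c : ℝ) : EReal) := by
      have : ((a : ℝ) : EReal) + ((b : ℝ) : EReal) < A + B := by
        calc ((a : ℝ) : EReal) + ((b : ℝ) : EReal) < A + ((b : ℝ) : EReal) :=
              EReal.add_lt_add_right_coe hcon b
          _ ≤ A + B := add_le_add le_rfl hBb
      calc ((a : ℝ) : EReal) + ((b : ℝ) : EReal) + ((c : ℝ) : EReal)
          < (A + B) + ((c : ℝ) : EReal) := EReal.add_lt_add_right_coe this c
        _ = A + B + ((c : ℝ) : EReal) := rfl
    have h2 : ((a : ℝ) : EReal) + ((b : ℝ) : EReal) + ((c : ℝ) : EReal)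
        = ((ps p : ℝ) : EReal) := by
      rw [← EReal.coe_add, ← EReal.coe_add, habc]
    rw [h2] at h1
    exact absurd hL (not_le.2 h1)
  have hBle : B ≤ ((b : ℝ) : EReal) := by
    by_contra hcon
    push_neg at hcon
    have h1 : ((a : ℝ) : EReal) + ((b : ℝ) : EReal) + ((c : ℝ) : EReal)
        < A + B + ((c : ℝ) : EReal) := by
      have : ((a : ℝ) : EReal) + ((b : ℝ) : EReal) < A + B := by
        calc ((a : ℝ) : EReal) + ((b : ℝ) : EReal) = ((b : ℝ) : EReal) + ((a : ℝ) : EReal) :=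
              add_comm _ _
          _ < B + ((a : ℝ) : EReal) := EReal.add_lt_add_right_coe hcon a
          _ ≤ B + A := add_le_add le_rfl hAa
          _ = A + B := add_comm _ _
      calc ((a : ℝ) : EReal) + ((b : ℝ) : EReal) + ((c : ℝ) : EReal)
          < (A + B) + ((c : ℝ) : EReal) := EReal.add_lt_add_right_coe this c
        _ = A + B + ((c : ℝ) : EReal) := rfl
    have h2 : ((a : ℝ) : EReal) + ((b : ℝ) : EReal) + ((c : ℝ) : EReal)
        = ((ps p : ℝ) : EReal) := by
      rw [← EReal.coe_add, ← EReal.coe_add, habc]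
    rw [h2] at h1
    exact absurd hL (not_le.2 h1)
  have hAeq : A = ((a : ℝ) : EReal) := le_antisymm hAle hAa
  have hBeq' : B = ((b : ℝ) : EReal) := le_antisymm hBle hBb
  refine ⟨hAeq, hBeq', ?_⟩
  have hSmem : ps - ubs ∈ S (p - ub) := keyS.2 hAeq
  have hTmem : ubs ∈ T (-ub) := by
    apply keyT.2
    rw [← hBeq, hBeq']
    simp [hb, map_neg]
  exact ⟨ps - ubs, hSmem, ubs, hTmem, sub_add_cancel ps ubs⟩
end
end

section
/- Let X be a reflexive Banach space and S, T : X ⇉ X* maximal monotone, p ∈ X, p* ∈ X*, and f_S ∈ F_S, f_T ∈ F_T representative functions. Then (f_S + f̂_T(· − p, · − p*))*(p*, p) ≤ ⟨p*, p⟩. -/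
noncomputable section

open scoped Topology Pointwise

variable {X : Type*} [NormedAddCommGroup X] [NormedSpace ℝ X]

/-- `(f_S + f̂_T(· − p, · − p*))*(p*, p) ≤ ⟨p*, p⟩`. -/
theorem conj_sum_le_pairing [CompleteSpace X] (hX : Reflexive' X)
    (S T : X → Set (Dd X)) (hS : IsMaxMonotone S) (hT : IsMaxMonotone T)
    (p : X) (ps : Dd X)
    (FS FT : X × Dd X → EReal) (hFS : IsRepr S FS) (hFT : IsRepr T FT) :
    conj2 (fun q : X × Dd X => FS q + hatF FT (q.1 - p, q.2 - ps)) (ps, p)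
      ≤ ((ps p : ℝ) : EReal) := by
  refine iSup_le fun q => ?_
  have h1 := hFS.2.2.1 q
  have h2 := hFT.2.2.1 (q.1 - p, ps - q.2)
  have hhat : hatF FT (q.1 - p, q.2 - ps) = FT (q.1 - p, ps - q.2) := by
    simp [hatF, neg_sub]
  simp only [hhat]
  have key : ((ps q.1 + q.2 p : ℝ) : EReal) - (FS q + FT (q.1 - p, ps - q.2))
      ≤ ((ps q.1 + q.2 p : ℝ) : EReal) -
        (((q.2 q.1 : ℝ) : EReal) + (((ps - q.2) (q.1 - p) : ℝ) : EReal)) :=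
    EReal.sub_le_sub le_rfl (add_le_add h1 h2)
  refine key.trans ?_
  rw [← EReal.coe_add, ← EReal.coe_sub, EReal.coe_le_coe_iff]
  simp only [ContinuousLinearMap.sub_apply, map_sub]
  ring_nf
  exact le_refl _
end
end

section
/- Let X be a reflexive Banach space and S, T : X ⇉ X* maximal monotone. Then 0 ∈ R(S + T) if and only if there exist representative functions f_S ∈ F_S and f_T ∈ F_T with dom f_S ∩ dom f̂_T ≠ ∅ such that f_S* □ f̂_T* is lower semicontinuous at (0, 0) and exact at (0, 0). -/
noncomputable section

open scoped Topology Pointwise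

variable {X : Type*} [NormedAddCommGroup X] [NormedSpace ℝ X]

namespace Proof11

variable {S T : X → Set (Dd X)} {F : X × Dd X → EReal}

/-- helper: real `x - c ≤ b` style comparison in EReal. -/
lemma coe_sub_le_of_le {x c : ℝ} {b : EReal} (h : ((x - c : ℝ) : EReal) ≤ b) :
    (x : EReal) - b ≤ (c : EReal) := by
  induction b with
  | bot => exact (EReal.coe_ne_bot _ (le_bot_iff.1 h)).elim
  | coe r =>
      have h' : x - c ≤ r := by exact_mod_cast h
      have : ((x - r : ℝ) : EReal) ≤ (c : ℝ) := by exact_mod_cast (by linarith : x - r ≤ c)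
      simpa [EReal.coe_sub] using this
  | top => simp [EReal.sub_top]

lemma graph_nonempty (hT : IsMaxMonotone T) : ∃ a as, as ∈ T a := by
  by_contra h
  push_neg at h
  exact h 0 0 (hT.2 0 0 (fun y ys hy => absurd hy (h y ys)))

lemma term_le_conj2 (F : X × Dd X → EReal) (p : Dd X × X) (q : X × Dd X) :
    ((p.1 q.1 + q.2 p.2 : ℝ) : EReal) - F q ≤ conj2 F p :=
  le_iSup (fun q : X × Dd X => ((p.1 q.1 + q.2 p.2 : ℝ) : EReal) - F q) q

lemma conj2_le {F : X × Dd X → EReal} {p : Dd X × X} {c : EReal}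
    (h : ∀ q : X × Dd X, ((p.1 q.1 + q.2 p.2 : ℝ) : EReal) - F q ≤ c) :
    conj2 F p ≤ c := iSup_le h

lemma conj2_ge_coupling (hT : IsMaxMonotone T) (hF : IsRepr T F) (ys : Dd X) (y : X) :
    ((ys y : ℝ) : EReal) ≤ conj2 F (ys, y) := by
  by_cases hy : ys ∈ T y
  · have h1 := term_le_conj2 F (ys, y) (y, ys)
    rw [hF.2.2.2 (y, ys) hy] at h1
    refine le_trans (le_of_eq ?_) h1
    norm_cast
    ring
  · have hmax := hT.2 y ys
    have : ¬ ∀ b bs, bs ∈ T b → 0 ≤ (ys - bs) (y - b) := fun hc => hy (hmax hc)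
    push_neg at this
    obtain ⟨b, bs, hb, hlt⟩ := this
    have hexp : (ys - bs) (y - b) = ys y - ys b - bs y + bs b := by
      simp [ContinuousLinearMap.sub_apply, map_sub]; ring
    have hr : ys y ≤ ys b + bs y - bs b := by rw [hexp] at hlt; linarith
    have h1 := term_le_conj2 F (ys, y) (b, bs)
    rw [hF.2.2.2 (b, bs) hb] at h1
    refine le_trans ?_ h1
    simp only [← EReal.coe_sub]
    exact_mod_cast (by simpa using hr)

lemma repr_ge_affine (hF : IsRepr T F) {a : X} {as : Dd X} (ha : as ∈ T a) (p : X × Dd X) :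
    ((as p.1 + p.2 a - as a : ℝ) : EReal) ≤ F p := by
  rcases eq_or_ne (F p) ⊤ with htop | htop
  · rw [htop]; exact le_top
  have hbot : F p ≠ ⊥ := fun hb => by
    have := hF.2.2.1 p; rw [hb] at this; exact (EReal.coe_ne_bot _ (le_bot_iff.1 this))
  lift F p to ℝ using ⟨htop, hbot⟩ with r hr
  set A := p.2 p.1 with hA
  set B := p.2 a with hB
  set C := as p.1 with hC
  set c₀ := as a with hc₀
  rw [EReal.coe_le_coe_iff]
  -- key scalar inequality for every t ∈ (0,1]
  have key : ∀ t : ℝ, 0 < t → t ≤ 1 → t * A + (1 - t) * (C + B - c₀) ≤ r := by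
    intro t ht ht1
    have hconv := hF.1 p (a, as) t (1 - t) (le_of_lt ht) (by linarith) (by ring)
    have hFa : F (a, as) = ((c₀ : ℝ) : EReal) := hF.2.2.2 (a, as) ha
    rw [hFa, ← hr] at hconv
    have hrhs : (t : EReal) * ((r : ℝ) : EReal) + ((1 - t : ℝ) : EReal) * ((c₀ : ℝ) : EReal)
        = ((t * r + (1 - t) * c₀ : ℝ) : EReal) := by norm_cast
    rw [hrhs] at hconv
    have hcoupling := hF.2.2.1 (t • p + (1 - t) • (a, as))
    have hcval : ((t • p + (1 - t) • (a, as)).2 ((t • p + (1 - t) • (a, as)).1) : ℝ)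
        = t * t * A + t * (1 - t) * B + (1 - t) * t * C + (1 - t) * (1 - t) * c₀ := by
      simp [Prod.smul_fst, Prod.smul_snd, Prod.fst_add, Prod.snd_add,
        ContinuousLinearMap.add_apply, ContinuousLinearMap.smul_apply, map_add, map_smul,
        smul_eq_mul, hA, hB, hC, hc₀]
      ring
    rw [hcval] at hcoupling
    have hreal : t * t * A + t * (1 - t) * B + (1 - t) * t * C + (1 - t) * (1 - t) * c₀
        ≤ t * r + (1 - t) * c₀ := by exact_mod_cast hcoupling.trans hconv
    have h2 : t * (t * A + (1 - t) * (C + B - c₀)) ≤ t * r := by nlinarith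
    exact le_of_mul_le_mul_left h2 ht
  -- pass to the limit t → 0
  by_contra hlt
  push_neg at hlt
  set D := C + B - c₀ with hD
  have hδ : 0 < D - r := by simp only [hD]; linarith
  rcases le_or_gt D A with hDA | hDA
  · have := key 1 one_pos le_rfl
    simp at this
    linarith
  · set t := min 1 ((D - r) / (2 * |A - D| + 2)) with htdef
    have hpos : 0 < (D - r) / (2 * |A - D| + 2) := by positivity
    have ht : 0 < t := lt_min one_pos hpos
    have ht1 : t ≤ 1 := min_le_left _ _
    have hk := key t ht ht1
    -- t * A + (1 - t) * D ≤ r, i.e. D - r ≤ t * (D - A)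
    have h3 : D - r ≤ t * (D - A) := by nlinarith
    have habs : t * (D - A) ≤ t * |A - D| := by
      have : (D - A) ≤ |A - D| := by
        rw [abs_sub_comm]; exact le_abs_self _
      exact mul_le_mul_of_nonneg_left this (le_of_lt ht)
    have h4 : t * |A - D| ≤ (D - r) / (2 * |A - D| + 2) * (|A - D| + 1) := by
      have h5 : t ≤ (D - r) / (2 * |A - D| + 2) := min_le_right _ _
      have : t * |A - D| ≤ t * (|A - D| + 1) := by nlinarith [abs_nonneg (A - D)]
      refine this.trans ?_
      exact mul_le_mul_of_nonneg_right h5 (by positivity)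
    have h6 : (D - r) / (2 * |A - D| + 2) * (|A - D| + 1) = (D - r) / 2 := by
      field_simp
    rw [h6] at h4
    linarith [h3.trans (habs.trans h4)]

lemma conj2_le_coupling_on_graph (hF : IsRepr T F) {a : X} {as : Dd X} (ha : as ∈ T a) :
    conj2 F (as, a) ≤ ((as a : ℝ) : EReal) := by
  apply conj2_le
  intro q
  exact coe_sub_le_of_le (by simpa using repr_ge_affine hF ha q)

lemma conj2_eq_coupling_on_graph (hT : IsMaxMonotone T) (hF : IsRepr T F) {a : X} {as : Dd X}
    (ha : as ∈ T a) : conj2 F (as, a) = ((as a : ℝ) : EReal) :=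
  le_antisymm (conj2_le_coupling_on_graph hF ha) (conj2_ge_coupling hT hF as a)

lemma mem_of_conj2_le (hT : IsMaxMonotone T) (hF : IsRepr T F) {ys : Dd X} {y : X}
    (h : conj2 F (ys, y) ≤ ((ys y : ℝ) : EReal)) : ys ∈ T y := by
  apply hT.2
  intro b bs hb
  have h1 := (term_le_conj2 F (ys, y) (b, bs)).trans h
  rw [hF.2.2.2 (b, bs) hb] at h1
  have h2 : ys b + bs y - bs b ≤ ys y := by
    have := h1
    rw [← EReal.coe_sub] at this
    exact_mod_cast this
  have hexp : (ys - bs) (y - b) = ys y - ys b - bs y + bs b := by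
    simp [ContinuousLinearMap.sub_apply, map_sub]; ring
  rw [hexp]; linarith

lemma conj2_hatF (F : X × Dd X → EReal) (us : Dd X) (u : X) :
    conj2 (hatF F) (us, u) = conj2 F (us, -u) := by
  apply le_antisymm
  · apply iSup_le
    intro q
    have h := le_iSup (fun q : X × Dd X =>
      (((us, -u).1 q.1 + q.2 (us, -u).2 : ℝ) : EReal) - F q) (q.1, -q.2)
    refine le_trans ?_ h
    simp [hatF]
  · apply iSup_le
    intro q
    have h := le_iSup (fun q : X × Dd X =>
      (((us, u).1 q.1 + q.2 (us, u).2 : ℝ) : EReal) - hatF F q) (q.1, -q.2)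
    refine le_trans ?_ h
    simp [hatF]

lemma term_le_fitz (T : X → Set (Dd X)) {a : X} {as : Dd X} (ha : as ∈ T a) (p : X × Dd X) :
    ((as p.1 + p.2 a - as a : ℝ) : EReal) ≤ fitz T p :=
  le_iSup (fun q : {q : X × Dd X // q.2 ∈ T q.1} =>
    ((q.1.2 p.1 + p.2 q.1.1 - q.1.2 q.1.1 : ℝ) : EReal)) ⟨(a, as), ha⟩

lemma fitz_le {p : X × Dd X} {c : EReal}
    (h : ∀ a as, as ∈ T a → ((as p.1 + p.2 a - as a : ℝ) : EReal) ≤ c) : fitz T p ≤ c :=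
  iSup_le fun q => h q.1.1 q.1.2 q.2

lemma fitz_ge_coupling (hT : IsMaxMonotone T) (p : X × Dd X) :
    ((p.2 p.1 : ℝ) : EReal) ≤ fitz T p := by
  by_cases hp : p.2 ∈ T p.1
  · refine le_trans (le_of_eq ?_) (term_le_fitz T hp p)
    norm_cast
    ring
  · have hmax := hT.2 p.1 p.2
    have : ¬ ∀ b bs, bs ∈ T b → 0 ≤ (p.2 - bs) (p.1 - b) := fun hc => hp (hmax hc)
    push_neg at this
    obtain ⟨b, bs, hb, hlt⟩ := this
    have hexp : (p.2 - bs) (p.1 - b) = p.2 p.1 - p.2 b - bs p.1 + bs b := by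
      simp [ContinuousLinearMap.sub_apply, map_sub]; ring
    refine le_trans ?_ (term_le_fitz T hb p)
    rw [EReal.coe_le_coe_iff]
    rw [hexp] at hlt
    linarith

lemma fitz_isRepr (hT : IsMaxMonotone T) : IsRepr T (fitz T) := by
  refine ⟨?_, ?_, fitz_ge_coupling hT, ?_⟩
  · intro x y a b ha hb hab
    apply iSup_le
    intro q
    have hval : (q.1.2 (a • x + b • y).1 + (a • x + b • y).2 q.1.1 - q.1.2 q.1.1 : ℝ)
        = a * (q.1.2 x.1 + x.2 q.1.1 - q.1.2 q.1.1) + b * (q.1.2 y.1 + y.2 q.1.1 - q.1.2 q.1.1) := by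
      simp [Prod.fst_add, Prod.snd_add, Prod.smul_fst, Prod.smul_snd,
        ContinuousLinearMap.add_apply, ContinuousLinearMap.smul_apply, map_add, map_smul,
        smul_eq_mul]
      linear_combination (q.1.2 q.1.1) * hab
    rw [hval]
    have hsplit : ((a * (q.1.2 x.1 + x.2 q.1.1 - q.1.2 q.1.1)
        + b * (q.1.2 y.1 + y.2 q.1.1 - q.1.2 q.1.1) : ℝ) : EReal)
        = (a : EReal) * ((q.1.2 x.1 + x.2 q.1.1 - q.1.2 q.1.1 : ℝ) : EReal)
        + (b : EReal) * ((q.1.2 y.1 + y.2 q.1.1 - q.1.2 q.1.1 : ℝ) : EReal) := by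
      norm_cast
    rw [hsplit]
    gcongr
    · exact term_le_fitz T q.2 x
    · exact term_le_fitz T q.2 y
  · apply lowerSemicontinuous_iSup
    intro q
    apply Continuous.lowerSemicontinuous
    refine continuous_coe_real_ereal.comp ?_
    have h1 : Continuous fun p : X × Dd X => q.1.2 p.1 := q.1.2.continuous.comp continuous_fst
    have h2 : Continuous fun p : X × Dd X => p.2 q.1.1 :=
      (ContinuousLinearMap.apply ℝ ℝ q.1.1).continuous.comp continuous_snd
    exact (h1.add h2).sub continuous_const
  · intro p hp
    refine le_antisymm ?_ (fitz_ge_coupling hT p)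
    apply fitz_le
    intro a as ha
    have hmono := hT.1 ha hp
    have hexp : (p.2 - as) (p.1 - a) = p.2 p.1 - p.2 a - as p.1 + as a := by
      simp [ContinuousLinearMap.sub_apply, map_sub]; ring
    rw [EReal.coe_le_coe_iff]
    rw [hexp] at hmono
    linarith

lemma infConv_le {E : Type*} [AddCommGroup E] (g h : E → EReal) (y u : E) :
    infConv g h y ≤ g (y - u) + h u := iInf_le _ u

lemma le_infConv {E : Type*} [AddCommGroup E] {g h : E → EReal} {y : E} {c : EReal}
    (hc : ∀ u, c ≤ g (y - u) + h u) : c ≤ infConv g h y := le_iInf hc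

lemma coe_add_le {r₁ r₂ : ℝ} {a b : EReal} (ha : (r₁ : EReal) ≤ a) (hb : (r₂ : EReal) ≤ b) :
    ((r₁ + r₂ : ℝ) : EReal) ≤ a + b := by
  rw [EReal.coe_add]
  exact add_le_add ha hb

section Forward

variable {S T : X → Set (Dd X)}

lemma forward_dir (hS : IsMaxMonotone S) (hT : IsMaxMonotone T)
    {x₀ : X} {s t : Dd X} (hs : s ∈ S x₀) (ht : t ∈ T x₀) (hst : s + t = 0) :
    IsRepr S (fitz S) ∧ IsRepr T (fitz T) ∧
      (∃ q : X × Dd X, q ∈ edom (fitz S) ∧ q ∈ edom (hatF (fitz T))) ∧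
      LowerSemicontinuousAt (infConv (conj2 (fitz S)) (conj2 (hatF (fitz T)))) ((0 : Dd X), (0 : X)) ∧
      ExactAt (conj2 (fitz S)) (conj2 (hatF (fitz T))) ((0 : Dd X), (0 : X)) := by
  have hts : t = -s := by
    have := hst
    linear_combination (norm := module) this
  have hst' : -t = s := by rw [hts, neg_neg]
  have reprS := fitz_isRepr hS
  have reprT := fitz_isRepr hT
  set g := conj2 (fitz S) with hg
  set h := conj2 (hatF (fitz T)) with hh
  -- value of g at graph points of S and h via conj2_hatF
  have hgs : g (s, x₀) = ((s x₀ : ℝ) : EReal) := conj2_eq_coupling_on_graph hS reprS hs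
  have hht : ∀ us u, h (us, u) = conj2 (fitz T) (us, -u) := fun us u => conj2_hatF _ us u
  -- key affine minorant of the inf-convolution
  have key : ∀ p : Dd X × X, ((p.1 x₀ + s p.2 : ℝ) : EReal) ≤ infConv g h p := by
    intro p
    apply le_infConv
    intro u
    have h1 : (((p - u).1 x₀ + s (p - u).2 - s x₀ : ℝ) : EReal) ≤ g (p - u) := by
      have := term_le_conj2 (fitz S) (p - u) (x₀, s)
      rw [reprS.2.2.2 (x₀, s) hs] at this
      refine le_trans (le_of_eq ?_) this
      norm_cast
    have h2 : ((u.1 x₀ + t (-u.2) - t x₀ : ℝ) : EReal) ≤ h u := by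
      rw [show (u : Dd X × X) = (u.1, u.2) from rfl, hht u.1 u.2]
      have := term_le_conj2 (fitz T) (u.1, -u.2) (x₀, t)
      rw [reprT.2.2.2 (x₀, t) ht] at this
      refine le_trans (le_of_eq ?_) this
      norm_cast
    refine le_trans (le_of_eq ?_) (coe_add_le h1 h2)
    norm_cast
    have e1 : (p - u).1 x₀ = p.1 x₀ - u.1 x₀ := by
      simp [Prod.fst_sub, ContinuousLinearMap.sub_apply]
    have e2 : s ((p - u).2) = s p.2 - s u.2 := by
      simp [Prod.snd_sub, map_sub]
    have e3 : t (-u.2) = - t u.2 := by simp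
    have e4 : t u.2 = - s u.2 := by rw [hts]; simp
    have e5 : t x₀ = - s x₀ := by rw [hts]; simp
    rw [e1, e2, e3, e4, e5]
    ring
  -- candidates are all ≥ 0
  have hge : ∀ u : Dd X × X, (0 : EReal) ≤ g (((0 : Dd X), (0 : X)) - u) + h u := by
    intro u
    have h1 : ((u.1 u.2 : ℝ) : EReal) ≤ g (((0 : Dd X), (0 : X)) - u) := by
      have e : (((0 : Dd X), (0 : X)) - u) = (-u.1, -u.2) := by
        simp [Prod.ext_iff]
      rw [e]
      have := conj2_ge_coupling hS reprS (-u.1) (-u.2)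
      refine le_trans (le_of_eq ?_) this
      norm_cast
      simp
    have h2 : ((-(u.1 u.2) : ℝ) : EReal) ≤ h u := by
      rw [show (u : Dd X × X) = (u.1, u.2) from rfl, hht u.1 u.2]
      have := conj2_ge_coupling hT reprT u.1 (-u.2)
      refine le_trans (le_of_eq ?_) this
      norm_cast
      simp
    have := coe_add_le h1 h2
    simpa using this
  -- value of the inf-convolution at 0 is 0, attained at u₀
  set u₀ : Dd X × X := (t, -x₀) with hu₀
  have hval : g (((0 : Dd X), (0 : X)) - u₀) + h u₀ = 0 := by
    have e1 : (((0 : Dd X), (0 : X)) - u₀) = (s, x₀) := by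
      simp [hu₀, Prod.ext_iff, hst']
    rw [e1, hgs, hht t (-x₀)]
    rw [show -(-x₀) = x₀ by simp]
    rw [conj2_eq_coupling_on_graph hT reprT ht]
    norm_cast
    have : t x₀ = - s x₀ := by rw [hts]; simp
    rw [this]; ring
  have hinf0 : infConv g h ((0 : Dd X), (0 : X)) = 0 := by
    apply le_antisymm
    · rw [← hval]; exact infConv_le g h _ u₀
    · exact le_infConv hge
  refine ⟨reprS, reprT, ⟨(x₀, s), ?_, ?_⟩, ?_, ⟨u₀, by rw [hinf0, hval]⟩⟩
  · simp only [edom, Set.mem_setOf_eq, reprS.2.2.2 (x₀, s) hs]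
    exact EReal.coe_ne_top _
  · show fitz T (x₀, -s) ≠ ⊤
    rw [show (-s : Dd X) = t by rw [hts], reprT.2.2.2 (x₀, t) ht]
    exact EReal.coe_ne_top _
  · -- lower semicontinuity at (0,0)
    intro y hy
    rw [hinf0] at hy
    have hcont : ContinuousAt (fun p : Dd X × X => ((p.1 x₀ + s p.2 : ℝ) : EReal)) ((0 : Dd X), (0 : X)) := by
      apply Continuous.continuousAt
      refine continuous_coe_real_ereal.comp ?_
      have h1 : Continuous fun p : Dd X × X => p.1 x₀ :=
        (ContinuousLinearMap.apply ℝ ℝ x₀).continuous.comp continuous_fst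
      have h2 : Continuous fun p : Dd X × X => s p.2 := s.continuous.comp continuous_snd
      exact h1.add h2
    have h0 : (fun p : Dd X × X => ((p.1 x₀ + s p.2 : ℝ) : EReal)) ((0 : Dd X), (0 : X)) = 0 := by
      norm_cast
      simp
    have hmem : {z : EReal | y < z} ∈ 𝓝 ((fun p : Dd X × X => ((p.1 x₀ + s p.2 : ℝ) : EReal)) ((0 : Dd X), (0 : X))) := by
      rw [h0]
      exact Ioi_mem_nhds hy
    filter_upwards [hcont hmem] with p hp
    exact lt_of_lt_of_le hp (key p)

end Forward

section Backward

variable {S T : X → Set (Dd X)} {FS FT : X × Dd X → EReal}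

lemma core_contradiction (hS : IsMaxMonotone S) (hT : IsMaxMonotone T)
    (hFS : IsRepr S FS) (hFT : IsRepr T FT) (xb : X) (xbs : Dd X) {β : ℝ} (hβ : 0 < β)
    (hmin : ∀ v u : Dd X × X, ((v.1 xb + xbs v.2 + (u.1 xb + xbs u.2) + β : ℝ) : EReal)
      ≤ conj2 FS v + conj2 (hatF FT) u) : False := by
  set r₁ := xbs xb with hr₁
  have hfS : ((r₁ - β / 2 : ℝ) : EReal) < fitz S (xb, xbs) := by
    refine lt_of_lt_of_le ?_ (fitz_ge_coupling hS (xb, xbs))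
    exact_mod_cast (by linarith : r₁ - β / 2 < r₁)
  have hfT : ((-r₁ - β / 2 : ℝ) : EReal) < fitz T (xb, -xbs) := by
    refine lt_of_lt_of_le ?_ (fitz_ge_coupling hT (xb, -xbs))
    have : ((xb, -xbs) : X × Dd X).2 ((xb, -xbs) : X × Dd X).1 = -r₁ := by
      simp [hr₁]
    rw [this]
    exact_mod_cast (by linarith : -r₁ - β / 2 < -r₁)
  rw [fitz, lt_iSup_iff] at hfS hfT
  obtain ⟨⟨⟨a, as⟩, haS⟩, hqa⟩ := hfS
  obtain ⟨⟨⟨b, bs⟩, hbT⟩, hqb⟩ := hfT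
  simp only [EReal.coe_lt_coe_iff] at hqa hqb
  have hga : conj2 FS (as, a) = ((as a : ℝ) : EReal) := conj2_eq_coupling_on_graph hS hFS haS
  have hhb : conj2 (hatF FT) (bs, -b) = ((bs b : ℝ) : EReal) := by
    rw [conj2_hatF, neg_neg]
    exact conj2_eq_coupling_on_graph hT hFT hbT
  have hm := hmin (as, a) (bs, -b)
  rw [hga, hhb] at hm
  have hm' : as xb + xbs a + (bs xb + xbs (-b)) + β ≤ as a + bs b := by
    exact_mod_cast hm
  have e1 : xbs (-b) = -(xbs b) := by simp
  have e2 : (-xbs : Dd X) b = -(xbs b) := by simp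
  rw [e2] at hqb
  rw [e1] at hm'
  linarith

lemma conj2_epi_combo {F : X × Dd X → EReal} {v v' : Dd X × X} {t t' a b : ℝ}
    (ha : 0 ≤ a) (hb : 0 ≤ b) (hab : a + b = 1)
    (hv : conj2 F v ≤ (t : EReal)) (hv' : conj2 F v' ≤ (t' : EReal)) :
    conj2 F (a • v + b • v') ≤ ((a * t + b * t' : ℝ) : EReal) := by
  apply conj2_le
  intro q
  rcases eq_or_ne (F q) ⊥ with hb0 | hb0
  · exfalso
    have h1 := (term_le_conj2 F v q).trans hv
    rw [hb0, EReal.coe_sub_bot] at h1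
    exact absurd h1 (by simp)
  rcases eq_or_ne (F q) ⊤ with ht0 | ht0
  · rw [ht0, EReal.sub_top]
    exact bot_le
  have h1 := (term_le_conj2 F v q).trans hv
  have h2 := (term_le_conj2 F v' q).trans hv'
  lift F q to ℝ using ⟨ht0, hb0⟩ with ρ hρ
  rw [← EReal.coe_sub, EReal.coe_le_coe_iff] at h1 h2 ⊢
  have e1 : (a • v + b • v').1 q.1 = a * v.1 q.1 + b * v'.1 q.1 := by
    simp [Prod.fst_add, Prod.smul_fst, ContinuousLinearMap.add_apply,
      ContinuousLinearMap.smul_apply, smul_eq_mul]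
  have e2 : q.2 ((a • v + b • v').2) = a * q.2 v.2 + b * q.2 v'.2 := by
    simp [Prod.snd_add, Prod.smul_snd, map_add, map_smul, smul_eq_mul]
  rw [e1, e2]
  have k1 : a * (v.1 q.1 + q.2 v.2 - ρ) ≤ a * t := mul_le_mul_of_nonneg_left h1 ha
  have k2 : b * (v'.1 q.1 + q.2 v'.2 - ρ) ≤ b * t' := mul_le_mul_of_nonneg_left h2 hb
  have k3 : ρ = a * ρ + b * ρ := by rw [← add_mul, hab, one_mul]
  nlinarith [k1, k2, k3]

lemma conj2_lower {F : X × Dd X → EReal} {qb : X × Dd X} (hne_top : F qb ≠ ⊤)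
    (hne_bot : F qb ≠ ⊥) (v : Dd X × X) :
    ((v.1 qb.1 + qb.2 v.2 - (F qb).toReal : ℝ) : EReal) ≤ conj2 F v := by
  have h := term_le_conj2 F v qb
  rw [← EReal.coe_toReal hne_top hne_bot] at h
  rw [← EReal.coe_sub] at h
  exact h

set_option maxHeartbeats 2000000 in
lemma h00_le_zero [CompleteSpace X] (hX : Reflexive' X) (hS : IsMaxMonotone S)
    (hT : IsMaxMonotone T) (hFS : IsRepr S FS) (hFT : IsRepr T FT)
    {qb : X × Dd X} (hq1 : qb ∈ edom FS) (hq2 : qb ∈ edom (hatF FT))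
    (hlsc : LowerSemicontinuousAt (infConv (conj2 FS) (conj2 (hatF FT))) ((0 : Dd X), (0 : X))) :
    infConv (conj2 FS) (conj2 (hatF FT)) ((0 : Dd X), (0 : X)) ≤ 0 := by
  set g := conj2 FS with hgdef
  set h := conj2 (hatF FT) with hhdef
  by_contra hpos
  push_neg at hpos
  rw [show (0 : EReal) = ((0 : ℝ) : EReal) by norm_cast] at hpos
  obtain ⟨c, hc0, hcI⟩ := EReal.exists_between_coe_real hpos
  rw [EReal.coe_lt_coe_iff] at hc0
  have hev : ∀ᶠ p in 𝓝 ((0 : Dd X), (0 : X)), ((c : ℝ) : EReal) < infConv g h p := hlsc _ hcI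
  obtain ⟨U, hUsub, hUopen, hU0⟩ := mem_nhds_iff.1 hev
  -- lower bounds on g and h
  have hFSbot : FS qb ≠ ⊥ := fun hbt => by
    have := hFS.2.2.1 qb; rw [hbt] at this; exact EReal.coe_ne_bot _ (le_bot_iff.1 this)
  have hFTbot : hatF FT qb ≠ ⊥ := fun hbt => by
    have := hFT.2.2.1 (qb.1, -qb.2)
    have e : hatF FT qb = FT (qb.1, -qb.2) := rfl
    rw [← e, hbt] at this; exact EReal.coe_ne_bot _ (le_bot_iff.1 this)
  set K₁ := (FS qb).toReal with hK₁
  set K₂ := (hatF FT qb).toReal with hK₂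
  have hglb : ∀ v : Dd X × X, ((v.1 qb.1 + qb.2 v.2 - K₁ : ℝ) : EReal) ≤ g v :=
    fun v => conj2_lower hq1 hFSbot v
  have hhlb : ∀ u : Dd X × X, ((u.1 qb.1 + qb.2 u.2 - K₂ : ℝ) : EReal) ≤ h u :=
    fun u => conj2_lower hq2 hFTbot u
  have hgbot : ∀ v, g v ≠ ⊥ := fun v hbt => by
    have := hglb v; rw [hbt] at this; exact EReal.coe_ne_bot _ (le_bot_iff.1 this)
  have hhbot : ∀ u, h u ≠ ⊥ := fun u hbt => by
    have := hhlb u; rw [hbt] at this; exact EReal.coe_ne_bot _ (le_bot_iff.1 this)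
  -- the convex set C
  set C : Set ((Dd X × X) × ℝ) := {z | ∃ v u : Dd X × X, ∃ t₁ t₂ : ℝ,
    g v ≤ (t₁ : EReal) ∧ h u ≤ (t₂ : EReal) ∧ z = (v + u, t₁ + t₂)} with hCdef
  have hCconv : Convex ℝ C := by
    rintro z ⟨v, u, t₁, t₂, hv, hu, rfl⟩ z' ⟨v', u', t₁', t₂', hv', hu', rfl⟩ a b ha hb hab
    refine ⟨a • v + b • v', a • u + b • u', a * t₁ + b * t₁', a * t₂ + b * t₂',
      conj2_epi_combo ha hb hab hv hv', conj2_epi_combo ha hb hab hu hu', ?_⟩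
    simp only [Prod.smul_mk, Prod.mk_add_mk, smul_eq_mul, Prod.mk.injEq]
    constructor
    · module
    · ring
  -- z₀ is not in the closure of C
  set z₀ : (Dd X × X) × ℝ := (((0 : Dd X), (0 : X)), c / 2) with hz₀def
  have hz₀ : z₀ ∉ closure C := by
    intro hmem
    obtain ⟨z, ⟨hzU, hzlt⟩, hzC⟩ :=
      mem_closure_iff.1 hmem (U ×ˢ Set.Iio c) (hUopen.prod isOpen_Iio)
        ⟨hU0, by simp [hz₀def]; linarith⟩
    obtain ⟨v, u, t₁, t₂, hv, hu, rfl⟩ := hzC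
    have hI : infConv g h (v + u) ≤ ((t₁ + t₂ : ℝ) : EReal) := by
      refine (infConv_le g h (v + u) u).trans ?_
      have e : v + u - u = v := by abel
      rw [e, EReal.coe_add]
      exact add_le_add hv hu
    have hc' := hUsub hzU
    have : ((c : ℝ) : EReal) < ((t₁ + t₂ : ℝ) : EReal) := lt_of_lt_of_le hc' hI
    rw [EReal.coe_lt_coe_iff] at this
    simp only [Set.mem_Iio] at hzlt
    linarith
  -- separation
  obtain ⟨f, m, hfm, hmz⟩ :=
    geometric_hahn_banach_closed_point (hCconv.closure) isClosed_closure hz₀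
  have hfC : ∀ z ∈ C, f z < m := fun z hz => hfm z (subset_closure hz)
  set r := f ((0 : Dd X × X), (1 : ℝ)) with hrdef
  have hsplit : ∀ (p : Dd X × X) (t : ℝ), f (p, t) = f (p, 0) + t * r := by
    intro p t
    have e : ((p, t) : (Dd X × X) × ℝ) = (p, 0) + t • ((0 : Dd X × X), (1 : ℝ)) := by
      simp [Prod.ext_iff]
    rw [e, map_add, map_smul, smul_eq_mul]
  have hf00 : f (((0 : Dd X), (0 : X)), (0 : ℝ)) = 0 := by
    have : ((((0 : Dd X), (0 : X)), (0 : ℝ)) : (Dd X × X) × ℝ) = 0 := rfl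
    rw [this, map_zero]
  have hmz' : m < (c / 2) * r := by
    have := hmz
    rw [hz₀def] at this
    rw [hsplit ((0 : Dd X), (0 : X)) (c / 2), hf00, zero_add] at this
    exact this
  -- r ≤ 0
  obtain ⟨a, as, haS⟩ := graph_nonempty hS
  obtain ⟨b, bs, hbT⟩ := graph_nonempty hT
  have hga : g (as, a) ≤ ((as a : ℝ) : EReal) := conj2_le_coupling_on_graph hFS haS
  have hhb : h (bs, -b) ≤ ((bs b : ℝ) : EReal) := by
    rw [hhdef, conj2_hatF, neg_neg]
    exact conj2_le_coupling_on_graph hFT hbT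
  have hmemC : ∀ n : ℕ, (((as, a) + (bs, -b) : Dd X × X), (as a + n) + bs b) ∈ C := by
    intro n
    refine ⟨(as, a), (bs, -b), as a + n, bs b, ?_, hhb, rfl⟩
    refine hga.trans ?_
    exact_mod_cast (by linarith [Nat.cast_nonneg (α := ℝ) n] : as a ≤ as a + (n : ℝ))
  have hr : r ≤ 0 := by
    by_contra hrpos
    push_neg at hrpos
    set p₁ : Dd X × X := (as, a) + (bs, -b) with hp₁
    obtain ⟨n, hn⟩ := exists_nat_gt ((m - f (p₁, 0)) / r - (as a + bs b))
    have hfn := hfC _ (hmemC n)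
    rw [hsplit p₁ ((as a + n) + bs b)] at hfn
    have : (m - f (p₁, 0)) / r < (as a + n) + bs b := by linarith
    rw [div_lt_iff₀ hrpos] at this
    linarith
  -- decompose the linear functional (p ↦ f (p, 0)) using reflexivity
  set φ : (Dd X × X) →L[ℝ] ℝ := f.comp (ContinuousLinearMap.inl ℝ (Dd X × X) ℝ) with hφdef
  have hφ : ∀ p : Dd X × X, φ p = f (p, 0) := fun p => rfl
  set φ₁ : Dd X →L[ℝ] ℝ := φ.comp (ContinuousLinearMap.inl ℝ (Dd X) X) with hφ₁def
  set φ₂ : X →L[ℝ] ℝ := φ.comp (ContinuousLinearMap.inr ℝ (Dd X) X) with hφ₂def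
  obtain ⟨xf, hxf⟩ := hX φ₁
  have hxf' : ∀ ps : Dd X, φ₁ ps = ps xf := by
    intro ps
    rw [← hxf]
    exact NormedSpace.dual_def ℝ X xf ps
  have hfdecomp : ∀ p : Dd X × X, f (p, 0) = p.1 xf + φ₂ p.2 := by
    intro p
    have e : p = ((p.1, 0) : Dd X × X) + (0, p.2) := by simp
    rw [← hφ p]
    calc φ p = φ ((p.1, 0) + ((0 : Dd X), p.2)) := by rw [← e]
      _ = φ₁ p.1 + φ₂ p.2 := by rw [map_add]; rfl
      _ = p.1 xf + φ₂ p.2 := by rw [hxf' p.1]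
  clear_value r φ₂ K₁ K₂
  -- two cases on r
  rcases hr.lt_or_eq with hrneg | hrzero
  · -- r < 0
    exfalso
    have hβpos : 0 < m / r := by
      have hcr : c / 2 * r < 0 := mul_neg_of_pos_of_neg (by linarith) hrneg
      exact div_pos_of_neg_of_neg (by linarith) hrneg
    refine core_contradiction hS hT hFS hFT ((-r)⁻¹ • xf) ((-r)⁻¹ • φ₂) hβpos ?_
    intro v u
    change _ ≤ g v + h u
    rcases eq_or_ne (g v) ⊤ with hgt | hgt
    · rw [hgt, EReal.top_add_of_ne_bot (hhbot u)]; exact le_top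
    rcases eq_or_ne (h u) ⊤ with hht | hht
    · rw [hht, EReal.add_top_of_ne_bot (hgbot v)]; exact le_top
    lift g v to ℝ using ⟨hgt, hgbot v⟩ with gv hgv
    lift h u to ℝ using ⟨hht, hhbot u⟩ with hu hhu
    rw [← EReal.coe_add, EReal.coe_le_coe_iff]
    have hfin := hfC (v + u, gv + hu) ⟨v, u, gv, hu, le_of_eq hgv.symm, le_of_eq hhu.symm, rfl⟩
    rw [hsplit (v + u) (gv + hu), hfdecomp (v + u)] at hfin
    have e1 : v.1 ((-r)⁻¹ • xf) = (-r)⁻¹ * v.1 xf := by rw [map_smul, smul_eq_mul]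
    have e2 : u.1 ((-r)⁻¹ • xf) = (-r)⁻¹ * u.1 xf := by rw [map_smul, smul_eq_mul]
    have e3 : ((-r)⁻¹ • φ₂) v.2 = (-r)⁻¹ * φ₂ v.2 := rfl
    have e4 : ((-r)⁻¹ • φ₂) u.2 = (-r)⁻¹ * φ₂ u.2 := rfl
    rw [e1, e2, e3, e4]
    have e5 : (v + u).1 xf = v.1 xf + u.1 xf := by
      simp [Prod.fst_add, ContinuousLinearMap.add_apply]
    have e6 : φ₂ ((v + u).2) = φ₂ v.2 + φ₂ u.2 := by
      simp [Prod.snd_add, map_add]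
    rw [e5, e6] at hfin
    have hrne : r ≠ 0 := ne_of_lt hrneg
    have hrne' : (-r) ≠ 0 := neg_ne_zero.2 hrne
    have hinv : (0 : ℝ) < (-r)⁻¹ := inv_pos.2 (by linarith)
    have key : (-r)⁻¹ * (v.1 xf + u.1 xf + (φ₂ v.2 + φ₂ u.2) + (gv + hu) * r)
        ≤ (-r)⁻¹ * m := mul_le_mul_of_nonneg_left hfin.le hinv.le
    have e7 : (-r)⁻¹ * (v.1 xf + u.1 xf + (φ₂ v.2 + φ₂ u.2) + (gv + hu) * r)
        = (-r)⁻¹ * (v.1 xf + u.1 xf + (φ₂ v.2 + φ₂ u.2)) - (gv + hu) := by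
      field_simp
      ring
    have e8 : (-r)⁻¹ * m = -(m / r) := by
      rw [inv_neg, neg_mul, div_eq_mul_inv, mul_comm]
    have e9 : (-r)⁻¹ * (v.1 xf + u.1 xf + (φ₂ v.2 + φ₂ u.2))
        = (-r)⁻¹ * v.1 xf + (-r)⁻¹ * φ₂ v.2 + ((-r)⁻¹ * u.1 xf + (-r)⁻¹ * φ₂ u.2) := by
      ring
    linarith [key, e7, e8, e9]
  · -- r = 0
    exfalso
    have hm0 : m < 0 := by rw [hrzero] at hmz'; simpa using hmz'
    have hmne : m ≠ 0 := ne_of_lt hm0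
    obtain ⟨lam, β, hlamnn, hβpos, hβeq⟩ :
        ∃ lam β : ℝ, 0 ≤ lam ∧ 0 < β ∧ β = -(K₁ + K₂) - lam * m := by
      rcases le_or_gt 0 (K₁ + K₂ + 1) with h0K | h0K
      · refine ⟨(K₁ + K₂ + 1) / (-m), 1, div_nonneg h0K (by linarith), one_pos, ?_⟩
        have hm' : (-m) ≠ 0 := neg_ne_zero.2 hmne
        have hstep : (K₁ + K₂ + 1) / (-m) * m = -(K₁ + K₂ + 1) := by
          rw [div_mul_eq_mul_div, div_eq_iff hm']
          ring
        linarith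
      · exact ⟨0, -(K₁ + K₂), le_rfl, by linarith, by ring⟩
    refine core_contradiction hS hT hFS hFT (qb.1 + lam • xf) (qb.2 + lam • φ₂) hβpos ?_
    intro v u
    change _ ≤ g v + h u
    rcases eq_or_ne (g v) ⊤ with hgt | hgt
    · rw [hgt, EReal.top_add_of_ne_bot (hhbot u)]; exact le_top
    rcases eq_or_ne (h u) ⊤ with hht | hht
    · rw [hht, EReal.add_top_of_ne_bot (hgbot v)]; exact le_top
    lift g v to ℝ using ⟨hgt, hgbot v⟩ with gv hgv
    lift h u to ℝ using ⟨hht, hhbot u⟩ with hu hhu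
    rw [← EReal.coe_add, EReal.coe_le_coe_iff]
    have hfin := hfC (v + u, gv + hu) ⟨v, u, gv, hu, le_of_eq hgv.symm, le_of_eq hhu.symm, rfl⟩
    rw [hsplit (v + u) (gv + hu), hrzero, mul_zero, add_zero, hfdecomp (v + u)] at hfin
    have e5 : (v + u).1 xf = v.1 xf + u.1 xf := by
      simp [Prod.fst_add, ContinuousLinearMap.add_apply]
    have e6 : φ₂ ((v + u).2) = φ₂ v.2 + φ₂ u.2 := by
      simp [Prod.snd_add, map_add]
    rw [e5, e6] at hfin
    have hk1 : v.1 qb.1 + qb.2 v.2 - K₁ ≤ gv := by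
      have := hglb v
      rw [← hgv] at this
      exact_mod_cast this
    have hk2 : u.1 qb.1 + qb.2 u.2 - K₂ ≤ hu := by
      have := hhlb u
      rw [← hhu] at this
      exact_mod_cast this
    have hmul : lam * (v.1 xf + u.1 xf + (φ₂ v.2 + φ₂ u.2)) ≤ lam * m :=
      mul_le_mul_of_nonneg_left hfin.le hlamnn
    have e1 : v.1 (qb.1 + lam • xf) = v.1 qb.1 + lam * v.1 xf := by
      rw [map_add, map_smul, smul_eq_mul]
    have e2 : u.1 (qb.1 + lam • xf) = u.1 qb.1 + lam * u.1 xf := by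
      rw [map_add, map_smul, smul_eq_mul]
    have e3 : (qb.2 + lam • φ₂) v.2 = qb.2 v.2 + lam * φ₂ v.2 := rfl
    have e4 : (qb.2 + lam • φ₂) u.2 = qb.2 u.2 + lam * φ₂ u.2 := rfl
    rw [e1, e2, e3, e4, hβeq]
    nlinarith [hk1, hk2, hmul]

lemma backward_dir [CompleteSpace X] (hX : Reflexive' X) (hS : IsMaxMonotone S)
    (hT : IsMaxMonotone T) (hFS : IsRepr S FS) (hFT : IsRepr T FT)
    (hdom : ∃ q : X × Dd X, q ∈ edom FS ∧ q ∈ edom (hatF FT))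
    (hlsc : LowerSemicontinuousAt (infConv (conj2 FS) (conj2 (hatF FT))) ((0 : Dd X), (0 : X)))
    (hex : ExactAt (conj2 FS) (conj2 (hatF FT)) ((0 : Dd X), (0 : X))) :
    ∃ x : X, ∃ s ∈ S x, ∃ t ∈ T x, s + t = 0 := by
  obtain ⟨qb, hq1, hq2⟩ := hdom
  have h00 := h00_le_zero hX hS hT hFS hFT hq1 hq2 hlsc
  obtain ⟨u₀, hexact⟩ := hex
  have hsub : (((0 : Dd X), (0 : X)) - u₀) = (-u₀.1, -u₀.2) := by simp [Prod.ext_iff]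
  set r : ℝ := u₀.1 u₀.2 with hrdef
  have hAge : ((r : ℝ) : EReal) ≤ conj2 FS (-u₀.1, -u₀.2) := by
    have := conj2_ge_coupling hS hFS (-u₀.1) (-u₀.2)
    refine le_trans (le_of_eq ?_) this
    norm_cast
    simp [hrdef]
  have hBeq : conj2 (hatF FT) u₀ = conj2 FT (u₀.1, -u₀.2) := by
    rw [show (u₀ : Dd X × X) = (u₀.1, u₀.2) from rfl, conj2_hatF]
  have hBge : ((-r : ℝ) : EReal) ≤ conj2 (hatF FT) u₀ := by
    rw [hBeq]
    have := conj2_ge_coupling hT hFT u₀.1 (-u₀.2)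
    refine le_trans (le_of_eq ?_) this
    norm_cast
    simp [hrdef]
  have hABle : conj2 FS (-u₀.1, -u₀.2) + conj2 (hatF FT) u₀ ≤ 0 := by
    rw [← hsub, ← hexact]
    exact h00
  have hAbot : conj2 FS (-u₀.1, -u₀.2) ≠ ⊥ := fun hb => by
    rw [hb] at hAge; exact EReal.coe_ne_bot _ (le_bot_iff.1 hAge)
  have hBbot : conj2 (hatF FT) u₀ ≠ ⊥ := fun hb => by
    rw [hb] at hBge; exact EReal.coe_ne_bot _ (le_bot_iff.1 hBge)
  have hAtop : conj2 FS (-u₀.1, -u₀.2) ≠ ⊤ := fun ht => by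
    rw [ht, EReal.top_add_of_ne_bot hBbot] at hABle
    exact absurd hABle (by simp)
  have hBtop : conj2 (hatF FT) u₀ ≠ ⊤ := fun ht => by
    rw [ht, EReal.add_top_of_ne_bot hAbot] at hABle
    exact absurd hABle (by simp)
  lift conj2 FS (-u₀.1, -u₀.2) to ℝ using ⟨hAtop, hAbot⟩ with α hα
  lift conj2 (hatF FT) u₀ to ℝ using ⟨hBtop, hBbot⟩ with γ hγ
  have hABr : α + γ ≤ 0 := by exact_mod_cast hABle
  have hαr : r ≤ α := by exact_mod_cast hAge
  have hγr : -r ≤ γ := by exact_mod_cast hBge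
  have hαeq : α = r := by linarith
  have hγeq : γ = -r := by linarith
  have hmemS : -u₀.1 ∈ S (-u₀.2) := by
    apply mem_of_conj2_le hS hFS
    rw [← hα, hαeq]
    exact le_of_eq (by norm_cast; simp [hrdef])
  have hmemT : u₀.1 ∈ T (-u₀.2) := by
    apply mem_of_conj2_le hT hFT
    rw [← hBeq, hγeq]
    exact le_of_eq (by norm_cast; simp [hrdef])
  exact ⟨-u₀.2, -u₀.1, hmemS, u₀.1, hmemT, by abel⟩

end Backward

end Proof11

/-- `0 ∈ R(S + T)` iff `f_S* □ f̂_T*` is lsc and exact at `(0, 0)` for some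
representative functions with intersecting domains. -/
theorem zero_mem_range_sum_iff [CompleteSpace X] (hX : Reflexive' X)
    (S T : X → Set (Dd X)) (hS : IsMaxMonotone S) (hT : IsMaxMonotone T) :
    (∃ x : X, ∃ s ∈ S x, ∃ t ∈ T x, s + t = 0) ↔
    (∃ FS FT : X × Dd X → EReal, IsRepr S FS ∧ IsRepr T FT ∧
      (∃ q : X × Dd X, q ∈ edom FS ∧ q ∈ edom (hatF FT)) ∧
      LowerSemicontinuousAt (infConv (conj2 FS) (conj2 (hatF FT))) ((0 : Dd X), (0 : X)) ∧
      ExactAt (conj2 FS) (conj2 (hatF FT)) ((0 : Dd X), (0 : X))) := by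
  constructor
  · rintro ⟨x, s, hs, t, ht, hst⟩
    obtain ⟨h1, h2, h3, h4, h5⟩ := Proof11.forward_dir hS hT hs ht hst
    exact ⟨fitz S, fitz T, h1, h2, h3, h4, h5⟩
  · rintro ⟨FS, FT, hFS, hFT, hdom, hlsc, hex⟩
    exact Proof11.backward_dir hX hS hT hFS hFT hdom hlsc hex
end
end

section
/- On X = ℝ, let S = ∂δ_{[0,∞)} and T = ∂δ_{{0}} with Fitzpatrick functions φ_S and φ_T. Then dom φ_S − dom φ̂_T = [0, ∞) × ℝ, and {0} × ℝ is not contained in the interior (0, ∞) × ℝ of this set; nevertheless S + T is surjective: R(S + T) = ℝ. -/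
noncomputable section

open scoped Topology Pointwise

variable {X : Type*} [NormedAddCommGroup X] [NormedSpace ℝ X]

/-- The Fitzpatrick function of an operator `S : ℝ ⇉ ℝ` (dual identified with `ℝ`). -/
def fitzR (S : ℝ → Set ℝ) : ℝ × ℝ → EReal :=
  fun p => ⨆ q : {q : ℝ × ℝ // q.2 ∈ S q.1},
    ((q.1.2 * p.1 + p.2 * q.1.1 - q.1.2 * q.1.1 : ℝ) : EReal)

/-- Conjugate of a function on `ℝ × ℝ`, evaluated on `ℝ × ℝ` with flipped pairing. -/
def conj2R (F : ℝ × ℝ → EReal) : ℝ × ℝ → EReal :=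
  fun p => ⨆ q : ℝ × ℝ, ((p.1 * q.1 + q.2 * p.2 : ℝ) : EReal) - F q


lemma aux_isup_coe_eq_top {ι : Type*} (f : ι → ℝ) (h : ∀ c : ℝ, ∃ i, c < f i) :
    (⨆ i, ((f i : ℝ) : EReal)) = ⊤ := by
  rw [iSup_eq_top]
  intro b hb
  induction b using EReal.rec with
  | bot => obtain ⟨i, _⟩ := h 0; exact ⟨i, by simp⟩
  | coe c => obtain ⟨i, hi⟩ := h c; exact ⟨i, by exact_mod_cast hi⟩
  | top => exact absurd hb (lt_irrefl _)

lemma aux_isup_coe_ne_top {ι : Type*} (f : ι → ℝ) (h : ∀ i, f i ≤ 0) :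
    (⨆ i, ((f i : ℝ) : EReal)) ≠ ⊤ := by
  intro heq
  have h1 : (⨆ i, ((f i : ℝ) : EReal)) ≤ ((0:ℝ) : EReal) :=
    iSup_le fun i => by exact_mod_cast h i
  rw [heq] at h1
  exact absurd h1 (by simp)

lemma aux_domS (S : ℝ → Set ℝ)
    (hS : ∀ x : ℝ, S x = if 0 < x then {0} else if x = 0 then Set.Iic (0 : ℝ) else ∅) :
    edom (fitzR S) = Set.Ici (0:ℝ) ×ˢ Set.Iic (0:ℝ) := by
  ext p
  simp only [edom, fitzR, Set.mem_setOf_eq, Set.mem_prod, Set.mem_Ici, Set.mem_Iic]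
  constructor
  · intro hne
    by_contra hcon
    push_neg at hcon
    apply hne
    rcases lt_or_ge p.1 0 with h1 | h1
    · apply aux_isup_coe_eq_top
      intro c
      have hs : min 0 (c / p.1 - 1) ∈ S 0 := by
        rw [hS]; simp
      refine ⟨⟨(0, min 0 (c / p.1 - 1)), hs⟩, ?_⟩
      have hle : min 0 (c / p.1 - 1) ≤ c / p.1 - 1 := min_le_right _ _
      have : c / p.1 - 1 < c / p.1 := by linarith
      have hlt : min 0 (c / p.1 - 1) < c / p.1 := lt_of_le_of_lt hle this
      nlinarith [mul_lt_mul_of_neg_right hlt h1, mul_div_cancel₀ c (ne_of_lt h1)]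
    · have h2 : 0 < p.2 := hcon h1
      apply aux_isup_coe_eq_top
      intro c
      have hx : (0:ℝ) < max 1 ((c+1)/p.2) := lt_of_lt_of_le one_pos (le_max_left _ _)
      have hs : (0:ℝ) ∈ S (max 1 ((c+1)/p.2)) := by
        rw [hS]; simp [hx]
      refine ⟨⟨(max 1 ((c+1)/p.2), 0), hs⟩, ?_⟩
      simp only
      have : (c+1)/p.2 ≤ max 1 ((c+1)/p.2) := le_max_right _ _
      have h3 : c + 1 ≤ p.2 * max 1 ((c+1)/p.2) := by
        rw [mul_comm]
        calc c + 1 = ((c+1)/p.2) * p.2 := by field_simp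
        _ ≤ max 1 ((c+1)/p.2) * p.2 := mul_le_mul_of_nonneg_right this (le_of_lt h2)
      nlinarith
  · rintro ⟨h1, h2⟩
    apply aux_isup_coe_ne_top
    rintro ⟨⟨x, s⟩, hq⟩
    simp only
    rw [hS] at hq
    split_ifs at hq with hx hx0
    · simp at hq; subst hq; nlinarith
    · subst hx0; simp at hq ⊢; nlinarith
    · exact absurd hq (Set.notMem_empty _)

lemma aux_domT (T : ℝ → Set ℝ)
    (hT : ∀ x : ℝ, T x = if x = 0 then (Set.univ : Set ℝ) else ∅) :
    edom (fun p : ℝ × ℝ => fitzR T (p.1, -p.2)) = ({0} : Set ℝ) ×ˢ (Set.univ : Set ℝ) := by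
  ext p
  simp only [edom, fitzR, Set.mem_setOf_eq, Set.mem_prod, Set.mem_singleton_iff,
    Set.mem_univ, and_true]
  constructor
  · intro hne
    by_contra h1
    apply hne
    apply aux_isup_coe_eq_top
    intro c
    have hs : (c+1)/p.1 ∈ T 0 := by rw [hT]; simp
    refine ⟨⟨(0, (c+1)/p.1), hs⟩, ?_⟩
    simp only
    have : (c+1)/p.1 * p.1 = c + 1 := div_mul_cancel₀ _ h1
    nlinarith
  · intro h1
    apply aux_isup_coe_ne_top
    rintro ⟨⟨x, t⟩, hq⟩
    simp only
    rw [hT] at hq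
    split_ifs at hq with hx
    · subst hx; rw [h1]; ring_nf; exact le_refl _
    · exact absurd hq (Set.notMem_empty _)

/-- for `S = ∂δ_{[0,∞)}`, `T = ∂δ_{{0}}` on `ℝ`,
`dom φ_S − dom φ̂_T = [0,∞) × ℝ`, whose interior `(0,∞) × ℝ` does not contain `{0} × ℝ`,
yet `S + T` is surjective. -/
theorem example_interiority_fails_but_surjective
    (S T : ℝ → Set ℝ)
    (hS : ∀ x : ℝ, S x = if 0 < x then {0} else if x = 0 then Set.Iic (0 : ℝ) else ∅)
    (hT : ∀ x : ℝ, T x = if x = 0 then (Set.univ : Set ℝ) else ∅) :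
    edom (fitzR S) - edom (fun p : ℝ × ℝ => fitzR T (p.1, -p.2))
      = Set.Ici (0 : ℝ) ×ˢ (Set.univ : Set ℝ) ∧
    interior (edom (fitzR S) - edom (fun p : ℝ × ℝ => fitzR T (p.1, -p.2)))
      = Set.Ioi (0 : ℝ) ×ˢ (Set.univ : Set ℝ) ∧
    ¬ (({0} : Set ℝ) ×ˢ (Set.univ : Set ℝ) ⊆
        interior (edom (fitzR S) - edom (fun p : ℝ × ℝ => fitzR T (p.1, -p.2)))) ∧
    ∀ ps : ℝ, ∃ x : ℝ, ∃ s ∈ S x, ∃ t ∈ T x, s + t = ps := by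
  have hdS := aux_domS S hS
  have hdT := aux_domT T hT
  have hsub : edom (fitzR S) - edom (fun p : ℝ × ℝ => fitzR T (p.1, -p.2))
      = Set.Ici (0 : ℝ) ×ˢ (Set.univ : Set ℝ) := by
    rw [hdS, hdT]
    ext p
    constructor
    · rintro ⟨a, ha, b, hb, hab⟩
      simp only [Set.mem_prod, Set.mem_Ici, Set.mem_Iic] at ha
      simp only [Set.mem_prod, Set.mem_singleton_iff] at hb
      simp only [Set.mem_prod, Set.mem_Ici, Set.mem_univ, and_true]
      have : p.1 = a.1 - b.1 := by rw [← hab]; rfl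
      rw [this, hb.1]
      simpa using ha.1
    · intro hp
      simp only [Set.mem_prod, Set.mem_Ici, Set.mem_univ, and_true] at hp
      refine ⟨(p.1, min p.2 0), ?_, (0, min p.2 0 - p.2), ?_, ?_⟩
      · exact ⟨hp, Set.mem_Iic.mpr (min_le_right _ _)⟩
      · exact ⟨rfl, Set.mem_univ _⟩
      · ext <;> simp
  refine ⟨hsub, ?_, ?_, ?_⟩
  · rw [hsub, interior_prod_eq, interior_Ici, interior_univ]
  · rw [hsub]
    intro hcon
    have : ((0:ℝ), (0:ℝ)) ∈ interior (Set.Ici (0 : ℝ) ×ˢ (Set.univ : Set ℝ)) :=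
      hcon (by simp)
    rw [interior_prod_eq, interior_Ici, interior_univ] at this
    simp at this
  · intro ps
    refine ⟨0, 0, ?_, ps, ?_, by ring⟩
    · rw [hS]; simp
    · rw [hT]; simp
end
end

section
/- Let X be a reflexive Banach space, S : X ⇉ X* maximal monotone, and J the duality map Jx = ∂(½‖x‖²)(x) = {x* : ‖x‖² = ‖x*‖² = ⟨x*, x⟩}. Then for every p ∈ X the operator x ↦ S(p + x) + J(x) is surjective; in particular (p = 0), S + J is surjective (Rockafellar's surjectivity theorem). -/
noncomputable section

open scoped Topology Pointwise

variable {X : Type*} [NormedAddCommGroup X] [NormedSpace ℝ X]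

/-- The duality map `J x = ∂(½‖x‖²)(x) = {x* : ‖x‖² = ‖x*‖² = ⟨x*, x⟩}`. -/
def dualityMap (X : Type*) [NormedAddCommGroup X] [NormedSpace ℝ X] (x : X) : Set (Dd X) :=
  {xs | ‖x‖ ^ 2 = ‖xs‖ ^ 2 ∧ ‖x‖ ^ 2 = xs x}

private lemma rock_lin_zero {E : Type*} [NormedAddCommGroup E] [NormedSpace ℝ E]
    (L : E →L[ℝ] ℝ) (c : ℝ) (h : ∀ z, L z < c) : ∀ z, L z = 0 := by
  have hc : 0 < c := by simpa using h 0
  have key : ∀ z, L z ≤ 0 := by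
    intro z
    by_contra hz
    push_neg at hz
    have h2 := h ((c / L z) • z)
    rw [map_smul, smul_eq_mul, div_mul_cancel₀ _ (ne_of_gt hz)] at h2
    exact lt_irrefl _ h2
  intro z
  have h1 := key z
  have h2 := key (-z)
  rw [map_neg] at h2
  linarith

private lemma rock_normsq_combo {E : Type*} [SeminormedAddCommGroup E] [NormedSpace ℝ E]
    (a b : ℝ) (ha : 0 ≤ a) (hb : 0 ≤ b) (hab : a + b = 1) (x y : E) :
    ‖a • x + b • y‖^2 ≤ a * ‖x‖^2 + b * ‖y‖^2 := by
  have h := norm_add_le (a • x) (b • y)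
  rw [norm_smul, norm_smul, Real.norm_eq_abs, Real.norm_eq_abs,
    abs_of_nonneg ha, abs_of_nonneg hb] at h
  nlinarith [norm_nonneg x, norm_nonneg y, norm_nonneg (a • x + b • y),
    mul_nonneg (mul_nonneg ha hb) (sq_nonneg (‖x‖ - ‖y‖))]

lemma rock_pair_lb (x : X) (xs : Dd X) : -(‖x‖^2/2) - ‖xs‖^2/2 ≤ xs x := by
  have h1 : |xs x| ≤ ‖xs‖ * ‖x‖ := by
    simpa [Real.norm_eq_abs] using xs.le_opNorm x
  have h2 := (abs_le.mp h1).1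
  nlinarith [sq_nonneg (‖x‖ - ‖xs‖)]

lemma rock_sub_exp (xs us : Dd X) (x u : X) :
    (xs - us) (x - u) = xs x - xs u - us x + us u := by
  simp only [ContinuousLinearMap.sub_apply, map_sub]
  ring

set_option maxHeartbeats 1000000 in
set_option synthInstance.maxHeartbeats 200000 in
lemma rock_sep [CompleteSpace X] (hX : Reflexive' X)
    (T : X → Set (Dd X)) (hT : IsMaxMonotone T) :
    ∃ (y : X) (ystar : Dd X) (d : ℝ),
      (∀ u us, us ∈ T u → ystar u + us y - us u ≤ -d) ∧
      (∀ (x : X) (xs : Dd X), -(ystar x) - xs y - (‖x‖^2/2 + ‖xs‖^2/2) ≤ d) := by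
  classical
  -- the graph is nonempty
  have hGne : ∃ u₀ : X, ∃ w₀ : Dd X, w₀ ∈ T u₀ := by
    by_contra h
    push_neg at h
    exact h 0 0 (hT.2 0 0 (fun y ys hy => absurd hy (h y ys)))
  have pair_lb : ∀ (x : X) (xs : Dd X), -(‖x‖^2/2) - ‖xs‖^2/2 ≤ xs x := rock_pair_lb
  have sub_exp : ∀ (xs us : Dd X) (x u : X),
      (xs - us) (x - u) = xs x - xs u - us x + us u := rock_sub_exp
  -- A-membership forces domination of the pairing
  have hA_pair : ∀ (x : X) (xs : Dd X) (t : ℝ),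
      (∀ u us, us ∈ T u → us x + xs u - us u ≤ t) → xs x ≤ t := by
    intro x xs t ht
    by_cases hx : xs ∈ T x
    · have := ht x xs hx; linarith
    · have h : ¬ ∀ u us, us ∈ T u → 0 ≤ (xs - us) (x - u) := fun h => hx (hT.2 x xs h)
      push_neg at h
      obtain ⟨u, us, hus, hlt⟩ := h
      rw [sub_exp] at hlt
      have := ht u us hus
      linarith
  set A : Set ((X × Dd X) × ℝ) :=
    {p | ∀ u us, us ∈ T u → us p.1.1 + p.1.2 u - us u ≤ p.2} with hAdef
  set B : Set ((X × Dd X) × ℝ) :=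
    {p | p.2 < -(‖p.1.1‖^2/2) - ‖p.1.2‖^2/2} with hBdef
  have hAconv : Convex ℝ A := by
    intro p hp q hq a b ha hb hab
    intro u us hus
    have h1 := hp u us hus
    have h2 := hq u us hus
    have e : us ((a • p + b • q).1.1) + ((a • p + b • q).1.2) u - us u
        = a * (us p.1.1 + p.1.2 u - us u) + b * (us q.1.1 + q.1.2 u - us u) := by
      simp only [Prod.fst_add, Prod.snd_add, Prod.smul_fst, Prod.smul_snd, map_add, map_smul,
        ContinuousLinearMap.add_apply, ContinuousLinearMap.smul_apply, smul_eq_mul]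
      linear_combination (us u) * hab
    have e2 : ((a • p + b • q).2 : ℝ) = a * p.2 + b * q.2 := by
      simp only [Prod.snd_add, Prod.smul_snd, smul_eq_mul]
    show us ((a • p + b • q).1.1) + ((a • p + b • q).1.2) u - us u ≤ (a • p + b • q).2
    rw [e, e2]
    nlinarith [mul_le_mul_of_nonneg_left h1 ha, mul_le_mul_of_nonneg_left h2 hb]
  have hBconv : Convex ℝ B := by
    intro p hp q hq a b ha hb hab
    simp only [hBdef, Set.mem_setOf_eq] at hp hq ⊢
    simp only [Prod.fst_add, Prod.snd_add, Prod.smul_fst, Prod.smul_snd, smul_eq_mul]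
    have h1 := rock_normsq_combo a b ha hb hab p.1.1 q.1.1
    have h2 := rock_normsq_combo a b ha hb hab p.1.2 q.1.2
    rcases ha.lt_or_eq with ha' | ha'
    · nlinarith [mul_lt_mul_of_pos_left hp ha', mul_le_mul_of_nonneg_left hq.le hb]
    · have hb1 : b = 1 := by linarith
      have ha0 : a = 0 := ha'.symm
      subst hb1; subst ha0
      simpa using hq
  have hBopen : IsOpen B := by
    apply isOpen_lt continuous_snd
    fun_prop
  have hdisj : Disjoint B A := by
    rw [Set.disjoint_left]
    intro p hpB hpA
    have h1 : p.1.2 p.1.1 ≤ p.2 := hA_pair _ _ _ hpA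
    have h2 := pair_lb p.1.1 p.1.2
    simp only [hBdef, Set.mem_setOf_eq] at hpB
    linarith
  obtain ⟨f, c, hfB, hfA⟩ := geometric_hahn_banach_open hBconv hBopen hAconv hdisj
  set σ : ℝ := f (((0 : X), (0 : Dd X)), (1 : ℝ)) with hσdef
  have hdec : ∀ (x : X) (xs : Dd X) (t : ℝ),
      f ((x, xs), t) = f ((x, 0), 0) + f ((0, xs), 0) + t * σ := by
    intro x xs t
    have h : ((x,xs),t) = ((x,(0:Dd X)),(0:ℝ)) + (((0:X),xs),(0:ℝ))
        + t • (((0:X),(0:Dd X)),(1:ℝ)) := by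
      simp [Prod.ext_iff]
    rw [h, map_add, map_add, map_smul, smul_eq_mul, hσdef]
  have hzero1 : ∀ t : ℝ, f (((0:X),(0:Dd X)), t) = t * σ := by
    intro t
    have h := hdec 0 0 t
    have hz : (((0:X),(0:Dd X)),(0:ℝ)) = (0 : (X × Dd X) × ℝ) := rfl
    rw [hz, map_zero] at h
    simpa using h
  -- σ is nonnegative
  have hσ0 : 0 ≤ σ := by
    by_contra h
    push_neg at h
    set t : ℝ := (|c| + 1) / σ with ht
    have htneg : t < 0 := div_neg_of_pos_of_neg (by positivity) h
    have hmem : (((0:X),(0:Dd X)), t) ∈ B := by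
      simp only [hBdef, Set.mem_setOf_eq]
      simpa using htneg
    have hlt := hfB _ hmem
    rw [hzero1] at hlt
    have heq : t * σ = |c| + 1 := div_mul_cancel₀ _ (ne_of_lt h)
    rw [heq] at hlt
    have := le_abs_self c
    linarith
  -- σ is nonzero
  have hσpos : 0 < σ := by
    rcases hσ0.lt_or_eq with h | h
    · exact h
    exfalso
    set L : (X × Dd X) →L[ℝ] ℝ := f.comp (ContinuousLinearMap.inl ℝ (X × Dd X) ℝ) with hLdef
    have hLapp : ∀ z : X × Dd X, L z = f (z, 0) := fun z => rfl
    have hall : ∀ z : X × Dd X, L z < c := by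
      intro z
      have hmem : ((z.1, z.2), -(‖z.1‖^2/2) - ‖z.2‖^2/2 - 1) ∈ B := by
        simp only [hBdef, Set.mem_setOf_eq]
        linarith
      have hlt := hfB _ hmem
      rw [hdec] at hlt
      rw [hLapp]
      have hfz : f (z, (0:ℝ)) = f ((z.1, 0), 0) + f ((0, z.2), 0) + 0 * σ := by
        have h2 := hdec z.1 z.2 0
        simpa using h2
      rw [hfz]
      rw [← h] at hlt
      simp only [mul_zero, zero_mul, add_zero] at hlt ⊢
      linarith
    have hLzero := rock_lin_zero L c hall
    obtain ⟨u₀, w₀, hw₀⟩ := hGne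
    have hA0 : ((u₀, w₀), w₀ u₀) ∈ A := by
      intro u us hus
      have hm := hT.1 hus hw₀
      rw [sub_exp] at hm
      dsimp only
      linarith
    have hge := hfA _ hA0
    rw [hdec, ← h] at hge
    have e1 : f ((u₀, (0:Dd X)), (0:ℝ)) = L (u₀, 0) := rfl
    have e2 : f (((0:X), w₀), (0:ℝ)) = L (0, w₀) := rfl
    rw [e1, e2, hLzero, hLzero] at hge
    have hc0 : c ≤ 0 := by linarith [hge]
    have hBne : (((0:X),(0:Dd X)), (-1:ℝ)) ∈ B := by
      simp only [hBdef, Set.mem_setOf_eq]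
      norm_num
    have hlt := hfB _ hBne
    rw [hzero1, ← h] at hlt
    norm_num at hlt
    linarith
  -- components of f
  set f₁ : Dd X := f.comp ((ContinuousLinearMap.inl ℝ (X × Dd X) ℝ).comp
      (ContinuousLinearMap.inl ℝ X (Dd X))) with hf₁def
  set Φ : Dd X →L[ℝ] ℝ := f.comp ((ContinuousLinearMap.inl ℝ (X × Dd X) ℝ).comp
      (ContinuousLinearMap.inr ℝ X (Dd X))) with hΦdef
  have hf₁app : ∀ x : X, f₁ x = f ((x, 0), 0) := fun x => rfl
  have hΦapp : ∀ xs : Dd X, Φ xs = f ((0, xs), 0) := fun xs => rfl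
  obtain ⟨v, hv⟩ := hX (σ⁻¹ • Φ)
  have hv' : ∀ xs : Dd X, xs v = σ⁻¹ * Φ xs := by
    intro xs
    rw [← NormedSpace.dual_def ℝ X v xs, hv]
    rfl
  set y : X := -v with hydef
  set ystar : Dd X := (-σ⁻¹) • f₁ with hystardef
  have hy_app : ∀ us : Dd X, us y = -(σ⁻¹ * Φ us) := by
    intro us
    rw [hydef, map_neg, hv' us]
  have hystar_app : ∀ x : X, ystar x = -(σ⁻¹ * f₁ x) := by
    intro x
    rw [hystardef]
    simp only [ContinuousLinearMap.smul_apply, smul_eq_mul]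
    ring
  -- graph points lie in A
  have hgraphA : ∀ u us, us ∈ T u → ((u, us), us u) ∈ A := by
    intro u us hus u' us' hus'
    have hm := hT.1 hus' hus
    rw [sub_exp] at hm
    dsimp only
    linarith
  -- key inequality on the graph
  have hstar : ∀ u us, us ∈ T u → ystar u + us y - us u ≤ -(c/σ) := by
    intro u us hus
    have h := hfA _ (hgraphA u us hus)
    rw [hdec] at h
    rw [← hf₁app, ← hΦapp] at h
    have e : ystar u + us y - us u = -(σ⁻¹ * (f₁ u + Φ us + us u * σ)) := by
      rw [hystar_app, hy_app]
      field_simp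
      ring
    rw [e]
    have h2 : c / σ ≤ σ⁻¹ * (f₁ u + Φ us + us u * σ) := by
      rw [div_eq_inv_mul]
      exact mul_le_mul_of_nonneg_left h (inv_nonneg.mpr hσpos.le)
    linarith
  -- inequality from B
  have hB' : ∀ (x : X) (xs : Dd X),
      -(ystar x) - xs y - (‖x‖^2/2 + ‖xs‖^2/2) ≤ c/σ := by
    intro x xs
    have hBle : f₁ x + Φ xs - (‖x‖^2/2 + ‖xs‖^2/2) * σ ≤ c := by
      refine le_of_forall_pos_le_add ?_
      intro ε hε
      have hmem : ((x, xs), -(‖x‖^2/2 + ‖xs‖^2/2) - ε/σ) ∈ B := by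
        simp only [hBdef, Set.mem_setOf_eq]
        have : 0 < ε/σ := div_pos hε hσpos
        linarith
      have h := hfB _ hmem
      rw [hdec, ← hf₁app, ← hΦapp] at h
      have expand : (-(‖x‖^2/2 + ‖xs‖^2/2) - ε/σ) * σ
          = -((‖x‖^2/2 + ‖xs‖^2/2) * σ) - ε := by
        field_simp
      rw [expand] at h
      linarith
    have e1 : f₁ x = σ * (-(ystar x)) := by
      rw [hystar_app]
      field_simp
    have e2 : Φ xs = σ * (-(xs y)) := by
      rw [hy_app]
      field_simp
    rw [e1, e2] at hBle
    rw [← mul_le_mul_iff_right₀ hσpos, mul_comm σ (c/σ), div_mul_cancel₀ _ hσpos.ne']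
    nlinarith [hBle]
  exact ⟨y, ystar, c/σ, hstar, hB'⟩

set_option synthInstance.maxHeartbeats 200000 in
lemma rock_claim1 (ystar : Dd X) :
    ∀ ε : ℝ, 0 < ε → ∃ x : X, ‖ystar‖^2/2 - ε ≤ -(ystar x) - ‖x‖^2/2 := by
  intro ε hε
  by_cases hy0 : ‖ystar‖ = 0
  · refine ⟨0, ?_⟩
    simp only [map_zero, norm_zero, hy0]
    norm_num
    linarith
  · have hpos : 0 < ‖ystar‖ := lt_of_le_of_ne (norm_nonneg _) (Ne.symm hy0)
    set δ : ℝ := ε / ‖ystar‖ with hδ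
    have hδpos : 0 < δ := div_pos hε hpos
    obtain ⟨u, hu1, hu2⟩ := ystar.exists_lt_apply_of_lt_opNorm
      (r := ‖ystar‖ - δ) (by linarith)
    rw [Real.norm_eq_abs] at hu2
    have hδε : δ * ‖ystar‖ = ε := div_mul_cancel₀ _ hy0
    rcases le_or_gt 0 (ystar u) with hs | hs
    · refine ⟨(-‖ystar‖) • u, ?_⟩
      have ha1 : ystar ((-‖ystar‖) • u) = -‖ystar‖ * ystar u := by
        rw [map_smul, smul_eq_mul]
      have ha2 : ‖(-‖ystar‖) • u‖ ≤ ‖ystar‖ := by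
        rw [norm_smul, Real.norm_eq_abs, abs_neg, abs_of_nonneg (norm_nonneg _)]
        nlinarith [norm_nonneg ystar]
      rw [ha1]
      have habs : |ystar u| = ystar u := abs_of_nonneg hs
      rw [habs] at hu2
      nlinarith [norm_nonneg ((-‖ystar‖) • u)]
    · refine ⟨‖ystar‖ • u, ?_⟩
      have ha1 : ystar (‖ystar‖ • u) = ‖ystar‖ * ystar u := by
        rw [map_smul, smul_eq_mul]
      have ha2 : ‖‖ystar‖ • u‖ ≤ ‖ystar‖ := by
        rw [norm_smul, Real.norm_eq_abs, abs_of_nonneg (norm_nonneg _)]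
        nlinarith [norm_nonneg ystar]
      rw [ha1]
      have habs : |ystar u| = -(ystar u) := abs_of_neg hs
      rw [habs] at hu2
      nlinarith [norm_nonneg (‖ystar‖ • u)]

set_option synthInstance.maxHeartbeats 200000 in
lemma rock_claim2 (y : X) : ∃ xs : Dd X, ‖y‖^2/2 ≤ -(xs y) - ‖xs‖^2/2 := by
  by_cases hy0 : y = 0
  · exact ⟨0, by simp [hy0]⟩
  · obtain ⟨g, hg1, hg2⟩ := exists_dual_vector ℝ y (norm_ne_zero_iff.mpr hy0)
    have hg2' : g y = ‖y‖ := by exact_mod_cast hg2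
    refine ⟨(-‖y‖) • g, ?_⟩
    have h1 : ((-‖y‖) • g) y = -‖y‖ * g y := by
      rw [ContinuousLinearMap.smul_apply, smul_eq_mul]
    have h2 : ‖(-‖y‖) • g‖ ≤ ‖y‖ := by
      have h3 := ContinuousLinearMap.opNorm_smul_le (-‖y‖) g
      rw [hg1, mul_one, Real.norm_eq_abs, abs_neg, abs_of_nonneg (norm_nonneg _)] at h3
      exact h3
    rw [h1, hg2']
    nlinarith [norm_nonneg y, norm_nonneg ((-‖y‖) • g)]

set_option maxHeartbeats 1000000 in
set_option synthInstance.maxHeartbeats 200000 in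
lemma rock_zero [CompleteSpace X] (hX : Reflexive' X)
    (T : X → Set (Dd X)) (hT : IsMaxMonotone T) :
    ∃ x : X, ∃ s ∈ T x, ∃ j ∈ dualityMap X x, s + j = 0 := by
  obtain ⟨y, ystar, d, hstar, hB'⟩ := rock_sep hX T hT
  have pair_lb := rock_pair_lb (X := X)
  have hcσ : ‖y‖^2/2 + ‖ystar‖^2/2 ≤ d := by
    refine le_of_forall_pos_le_add ?_
    intro ε hε
    obtain ⟨x, hx⟩ := rock_claim1 ystar ε hε
    obtain ⟨xs, hxs⟩ := rock_claim2 y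
    have h := hB' x xs
    linarith
  -- maximality gives ystar ∈ T y
  have hystar_y : ystar ∈ T y := by
    apply hT.2
    intro u us hus
    have h1 := hstar u us hus
    have h3 := pair_lb y ystar
    rw [rock_sub_exp]
    linarith
  -- conclusion
  have hyy := hstar y ystar hystar_y
  have h3 := pair_lb y ystar
  have heq : ystar y = -(‖y‖^2/2) - ‖ystar‖^2/2 := by linarith
  have hcs : -(‖ystar‖ * ‖y‖) ≤ ystar y := by
    have h1 : |ystar y| ≤ ‖ystar‖ * ‖y‖ := by
      simpa [Real.norm_eq_abs] using ystar.le_opNorm y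
    linarith [(abs_le.mp h1).1]
  have hnormsq : (‖y‖ - ‖ystar‖)^2 = 0 := by
    nlinarith [sq_nonneg (‖y‖ - ‖ystar‖)]
  have hnorm : ‖y‖ = ‖ystar‖ := by
    have h0 : ‖y‖ - ‖ystar‖ = 0 := sq_eq_zero_iff.mp hnormsq
    linarith
  refine ⟨y, ystar, hystar_y, -ystar, ⟨?_, ?_⟩, ?_⟩
  · rw [norm_neg, hnorm]
  · have : (-ystar) y = -(ystar y) := by
      rw [ContinuousLinearMap.neg_apply]
    rw [this, heq, ← hnorm]
    ring
  · exact add_neg_cancel _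

/-- for any maximal monotone `S` on a reflexive Banach space and any `p`,
`S(p + ·) + J(·)` is surjective; in particular `S + J` is surjective (Rockafellar). -/
theorem rockafellar_surjectivity [CompleteSpace X] (hX : Reflexive' X)
    (S : X → Set (Dd X)) (hS : IsMaxMonotone S) :
    (∀ (p : X) (ps : Dd X), ∃ x : X, ∃ s ∈ S (p + x), ∃ j ∈ dualityMap X x, s + j = ps) ∧
    (∀ ps : Dd X, ∃ x : X, ∃ s ∈ S x, ∃ j ∈ dualityMap X x, s + j = ps) := by
  have main : ∀ (p : X) (ps : Dd X),
      ∃ x : X, ∃ s ∈ S (p + x), ∃ j ∈ dualityMap X x, s + j = ps := by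
    intro p ps
    set T : X → Set (Dd X) := fun x => {xs | xs + ps ∈ S (p + x)} with hTdef
    have hT : IsMaxMonotone T := by
      constructor
      · intro x y xs ys hxs hys
        have h := hS.1 hxs hys
        have e1 : (ys + ps) - (xs + ps) = ys - xs := by abel
        have e2 : (p + y) - (p + x) = y - x := by abel
        rwa [e1, e2] at h
      · intro x xs hx
        have hrel : ∀ y' ys', ys' ∈ S y' → 0 ≤ ((xs + ps) - ys') ((p + x) - y') := by
          intro y' ys' hys'
          have hmem : (ys' - ps) ∈ T (y' - p) := by
            simp only [hTdef, Set.mem_setOf_eq]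
            have e3 : ys' - ps + ps = ys' := by abel
            have e4 : p + (y' - p) = y' := by abel
            rw [e3, e4]
            exact hys'
          have h := hx (y' - p) (ys' - ps) hmem
          have e1 : xs - (ys' - ps) = (xs + ps) - ys' := by abel
          have e2 : x - (y' - p) = (p + x) - y' := by abel
          rwa [e1, e2] at h
        exact hS.2 (p + x) (xs + ps) hrel
    obtain ⟨x, s', hs', j, hj, hsj⟩ := rock_zero hX T hT
    refine ⟨x, s' + ps, hs', j, hj, ?_⟩
    have e : s' + ps + j = (s' + j) + ps := by abel
    rw [e, hsj, zero_add]
  refine ⟨main, fun ps => ?_⟩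
  obtain ⟨x, s, hs, j, hj, h⟩ := main 0 ps
  rw [zero_add] at hs
  exact ⟨x, s, hs, j, hj, h⟩
end
end
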